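/- arXiv:0810.2207 — 3 statements merged into one kernel-verified Lean document; each statement's English description precedes it below -/
import Mathlib

section
/- Let Q be an LDP-polygon and let P be a centrally symmetric LDP-sub-parallelogram of Q, i.e. P is the convex hull of four vertices of Q, is a parallelogram with P = −P, and contains the origin in its interior. Then P is unimodularly equivalent to a parallelogram with vertices ±(1,0) and ±(p,q), where 0 ≤ p < q ≤ 4·o_Q² − 1. -/
open Pointwise

/-- The embedding of the lattice `ℤ²` into `ℚ²`. -/
def toQ (p : ℤ × ℤ) : ℚ × ℚ := ((p.1 : ℚ), (p.2 : ℚ))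

/-- The pairing between the dual lattice `ℤ²` and `ℚ²`. -/
def pairQ (η : ℤ × ℤ) (x : ℚ × ℚ) : ℚ := (η.1 : ℚ) * x.1 + (η.2 : ℚ) * x.2

/-- A lattice polygon: the convex hull of finitely many lattice points,
with nonempty interior. -/
def IsLatticePolygon (Q : Set (ℚ × ℚ)) : Prop :=
  (∃ S : Finset (ℤ × ℤ), Q = convexHull ℚ (toQ '' (S : Set (ℤ × ℤ)))) ∧
    (interior Q).Nonempty

/-- An IP-polygon: a lattice polygon containing the origin in its interior. -/
def IsIPPolygon (Q : Set (ℚ × ℚ)) : Prop :=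
  IsLatticePolygon Q ∧ (0 : ℚ × ℚ) ∈ interior Q

/-- The vertices of a polygon are its extreme points. -/
def vertices (Q : Set (ℚ × ℚ)) : Set (ℚ × ℚ) := Set.extremePoints ℚ Q

/-- An LDP-polygon: an IP-polygon all of whose vertices are primitive lattice points. -/
def IsLDPPolygon (Q : Set (ℚ × ℚ)) : Prop :=
  IsIPPolygon Q ∧ ∀ v ∈ vertices Q, ∃ p : ℤ × ℤ, Int.gcd p.1 p.2 = 1 ∧ v = toQ p

/-- `IsFacetWith Q η l F` : `F` is a facet (edge) of `Q` with primitive outer normal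
`η` and local index `l`, i.e. `⟨η, x⟩ = l` on `F` and `⟨η, y⟩ ≤ l` on `Q`. -/
def IsFacetWith (Q : Set (ℚ × ℚ)) (η : ℤ × ℤ) (l : ℤ) (F : Set (ℚ × ℚ)) : Prop :=
  Int.gcd η.1 η.2 = 1 ∧ 0 < l ∧
  (∀ y ∈ Q, pairQ η y ≤ (l : ℚ)) ∧
  F = {x ∈ Q | pairQ η x = (l : ℚ)} ∧
  ∃ x ∈ F, ∃ y ∈ F, x ≠ y

/-- `F` is a facet of `Q`. -/
def IsFacet (Q F : Set (ℚ × ℚ)) : Prop := ∃ η l, IsFacetWith Q η l F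

/-- `HasMaxLocalIndex Q k` : the maximal local index `m_Q` of `Q` equals `k`. -/
def HasMaxLocalIndex (Q : Set (ℚ × ℚ)) (k : ℤ) : Prop :=
  (∃ F η, IsFacetWith Q η k F) ∧ ∀ F η l, IsFacetWith Q η l F → l ≤ k

/-- `HasIndex Q ℓ` : the index `ℓ_Q` of `Q` (the lcm of all local indices) equals `ℓ`. -/
def HasIndex (Q : Set (ℚ × ℚ)) (ℓ : ℤ) : Prop :=
  0 < ℓ ∧ (∀ F η l, IsFacetWith Q η l F → l ∣ ℓ) ∧
  ∀ m : ℤ, 0 < m → (∀ F η l, IsFacetWith Q η l F → l ∣ m) → ℓ ∣ m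

/-- The only lattice point in the interior of `(1/k)·Q` is the origin. -/
def NoIntLatticePts (Q : Set (ℚ × ℚ)) (k : ℤ) : Prop :=
  ∀ p : ℤ × ℤ, toQ p ∈ interior (((k : ℚ)⁻¹) • Q) → p = 0

/-- `HasOrder Q I` : the order `o_Q` of `Q` equals `I`. -/
def HasOrder (Q : Set (ℚ × ℚ)) (I : ℤ) : Prop :=
  1 ≤ I ∧ NoIntLatticePts Q I ∧ ∀ k : ℤ, 1 ≤ k → NoIntLatticePts Q k → I ≤ k

/-- The cone `pos(F) = ℝ≥0·F` spanned by `F` (inside `ℚ²`). -/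
def posCone (F : Set (ℚ × ℚ)) : Set (ℚ × ℚ) :=
  {y | ∃ t : ℚ, 0 ≤ t ∧ ∃ z ∈ F, y = t • z}

/-- The number of lattice points in a subset of `ℚ²`. -/
noncomputable def latticeCount (S : Set (ℚ × ℚ)) : ℕ :=
  {p : ℤ × ℤ | toQ p ∈ S}.ncard

/-- The normalised volume of `Q`: twice the Euclidean area of the corresponding
real region. -/
noncomputable def nVol (Q : Set (ℚ × ℚ)) : ℝ :=
  2 * (MeasureTheory.volume
    (closure ((fun x : ℚ × ℚ => ((x.1 : ℝ), (x.2 : ℝ))) '' Q))).toReal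

/-- Unimodular equivalence: `Q'` is the image of `Q` under an element of `GL(2,ℤ)`. -/
def UnimodEquiv (Q Q' : Set (ℚ × ℚ)) : Prop :=
  ∃ a b c d : ℤ, (a * d - b * c = 1 ∨ a * d - b * c = -1) ∧
    (fun x : ℚ × ℚ => ((a : ℚ) * x.1 + (b : ℚ) * x.2,
      (c : ℚ) * x.1 + (d : ℚ) * x.2)) '' Q = Q'

-- helpers
lemma toQ_neg (p : ℤ × ℤ) : toQ (-p) = - toQ p := by
  simp [toQ, Prod.ext_iff]

lemma prim_parallel {a b : ℤ × ℤ} (ha : Int.gcd a.1 a.2 = 1) (hb : Int.gcd b.1 b.2 = 1)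
    (h : a.1 * b.2 - a.2 * b.1 = 0) : a = b ∨ a = -b := by
  have hca : IsCoprime a.1 a.2 := Int.isCoprime_iff_gcd_eq_one.2 ha
  have hcb : IsCoprime b.1 b.2 := Int.isCoprime_iff_gcd_eq_one.2 hb
  have h' : a.1 * b.2 = a.2 * b.1 := by linarith
  have d1 : a.1 ∣ b.1 := hca.dvd_of_dvd_mul_left ⟨b.2, by linarith⟩
  have d2 : b.1 ∣ a.1 := hcb.dvd_of_dvd_mul_left ⟨a.2, by linarith⟩
  have d3 : a.2 ∣ b.2 := hca.symm.dvd_of_dvd_mul_left ⟨b.1, by linarith⟩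
  have d4 : b.2 ∣ a.2 := hcb.symm.dvd_of_dvd_mul_left ⟨a.1, by linarith⟩
  have e1 : a.1 = b.1 ∨ a.1 = -b.1 := Int.associated_iff.1 (associated_of_dvd_dvd d1 d2)
  have e2 : a.2 = b.2 ∨ a.2 = -b.2 := Int.associated_iff.1 (associated_of_dvd_dvd d3 d4)
  have hmc := mul_comm b.1 b.2
  rcases e1 with e1 | e1 <;> rcases e2 with e2 | e2
  · left; exact Prod.ext e1 e2
  · rw [e1, e2] at h'
    have hz : b.1 * b.2 = 0 := by linarith
    rcases mul_eq_zero.1 hz with h0 | h0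
    · right; simp [Prod.ext_iff, e1, e2, h0]
    · left; simp [Prod.ext_iff, e1, e2, h0]
  · rw [e1, e2] at h'
    have hz : b.1 * b.2 = 0 := by linarith
    rcases mul_eq_zero.1 hz with h0 | h0
    · left; simp [Prod.ext_iff, e1, e2, h0]
    · right; simp [Prod.ext_iff, e1, e2, h0]
  · right; simp [Prod.ext_iff, e1, e2]

lemma smul_mem_hull {s : Set (ℚ × ℚ)} {x : ℚ × ℚ} (hx : x ∈ s) (hx' : -x ∈ s) {γ : ℚ}
    (hγ : |γ| ≤ 1) : γ • x ∈ convexHull ℚ s := by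
  obtain ⟨hγ1, hγ2⟩ := abs_le.1 hγ
  have h1 : (0:ℚ) ≤ (1+γ)/2 := by linarith
  have h2 : (0:ℚ) ≤ (1-γ)/2 := by linarith
  have hmem := (convex_convexHull ℚ s) (subset_convexHull ℚ s hx) (subset_convexHull ℚ s hx')
    h1 h2 (by ring)
  have : ((1+γ)/2) • x + ((1-γ)/2) • (-x) = γ • x := by
    rw [smul_neg, ← sub_eq_add_neg, ← sub_smul]; congr 1; ring
  rwa [this] at hmem

lemma mem_hull4 (v w : ℚ × ℚ) {α β : ℚ} (h : |α| + |β| ≤ 1) :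
    α • v + β • w ∈ convexHull ℚ ({v, w, -v, -w} : Set (ℚ × ℚ)) := by
  have hv : v ∈ ({v, w, -v, -w} : Set (ℚ × ℚ)) := by simp
  have hv' : -v ∈ ({v, w, -v, -w} : Set (ℚ × ℚ)) := by simp
  have hw : w ∈ ({v, w, -v, -w} : Set (ℚ × ℚ)) := by simp
  have hw' : -w ∈ ({v, w, -v, -w} : Set (ℚ × ℚ)) := by simp
  have hβ1 : |β| ≤ 1 := le_trans (le_add_of_nonneg_left (abs_nonneg α)) h
  rcases eq_or_ne β 0 with hβ | hβ
  · subst hβ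
    simpa using smul_mem_hull hv hv' (by simpa using h)
  rcases eq_or_lt_of_le hβ1 with hβ2 | hβ2
  · have hα : α = 0 := by
      have : |α| ≤ 0 := by rw [← hβ2] at h; linarith
      simpa [abs_nonpos_iff] using this
    subst hα
    rcases (abs_eq (by norm_num : (0:ℚ) ≤ 1)).1 hβ2 with h1 | h1
    · simp only [h1, zero_smul, zero_add, one_smul]
      exact subset_convexHull ℚ _ hw
    · simp only [h1, zero_smul, zero_add, neg_one_smul]
      exact subset_convexHull ℚ _ hw'
  · have ht0 : 0 < |β| := abs_pos.2 hβ
    have ht1 : 0 < 1 - |β| := by linarith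
    have m1 : (α / (1 - |β|)) • v ∈ convexHull ℚ ({v, w, -v, -w} : Set (ℚ × ℚ)) := by
      apply smul_mem_hull hv hv'
      rw [abs_div, abs_of_pos ht1, div_le_one ht1]
      linarith [abs_nonneg α]
    have m2 : (β / |β|) • w ∈ convexHull ℚ ({v, w, -v, -w} : Set (ℚ × ℚ)) := by
      apply smul_mem_hull hw hw'
      rw [abs_div, abs_abs, div_self (ne_of_gt ht0)]
    have hmem := (convex_convexHull ℚ ({v, w, -v, -w} : Set (ℚ × ℚ))) m1 m2
      (le_of_lt ht1) (abs_nonneg β) (by ring)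
    have e1 : (1 - |β|) • ((α / (1 - |β|)) • v) = α • v := by
      rw [smul_smul, mul_div_cancel₀ _ (ne_of_gt ht1)]
    have e2 : |β| • ((β / |β|) • w) = β • w := by
      rw [smul_smul, mul_div_cancel₀ _ (ne_of_gt ht0)]
    rwa [e1, e2] at hmem



/-- Auxiliary: the linear map on `ℚ²` given by an integer matrix. -/
def intLinMap (A B C D : ℤ) : (ℚ × ℚ) →ₗ[ℚ] (ℚ × ℚ) where
  toFun := fun x => ((A : ℚ) * x.1 + (B : ℚ) * x.2, (C : ℚ) * x.1 + (D : ℚ) * x.2)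
  map_add' := by
    intro x y
    simp only [Prod.fst_add, Prod.snd_add, Prod.mk_add_mk, Prod.mk.injEq]
    constructor <;> ring
  map_smul' := by
    intro m x
    simp only [Prod.smul_fst, Prod.smul_snd, smul_eq_mul, RingHom.id_apply,
      Prod.smul_mk, Prod.mk.injEq]
    constructor <;> ring

lemma intLinMap_apply (A B C D : ℤ) (x : ℚ × ℚ) :
    intLinMap A B C D x = ((A : ℚ) * x.1 + (B : ℚ) * x.2, (C : ℚ) * x.1 + (D : ℚ) * x.2) := rfl

/-- Any centrally symmetric LDP-sub-parallelogram `P` of an LDP-polygon `Q` of order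
`I` is unimodularly equivalent to a parallelogram with vertices `±(1,0)` and
`±(p,q)`, where `0 ≤ p < q ≤ 4I² − 1`. -/
theorem ldp_sub_parallelogram_normal_form
    (Q P : Set (ℚ × ℚ)) (I : ℤ) (hQ : IsLDPPolygon Q) (hI : HasOrder Q I)
    (v w : ℚ × ℚ) (hv : v ∈ vertices Q) (hw : w ∈ vertices Q)
    (hv' : -v ∈ vertices Q) (hw' : -w ∈ vertices Q)
    (hP : P = convexHull ℚ {v, w, -v, -w})
    (hvert : {v, w, -v, -w} ⊆ vertices P)
    (hdist : v ≠ w ∧ v ≠ -w ∧ v ≠ -v ∧ w ≠ -w)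
    (hsym : P = -P)
    (h0 : (0 : ℚ × ℚ) ∈ interior P) :
    ∃ p q : ℤ, 0 ≤ p ∧ p < q ∧ q ≤ 4 * I ^ 2 - 1 ∧
      UnimodEquiv P (convexHull ℚ
        {toQ (1, 0), toQ (-1, 0), toQ (p, q), toQ (-p, -q)}) := by
  obtain ⟨⟨⟨⟨SQ, hSQ⟩, -⟩, -⟩, hprim⟩ := hQ
  have hQconv : Convex ℚ Q := hSQ ▸ convex_convexHull ℚ _
  obtain ⟨a, ha, hva⟩ := hprim v hv
  obtain ⟨b, hb, hwb⟩ := hprim w hw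
  have hd : a.1 * b.2 - a.2 * b.1 ≠ 0 := by
    intro h
    rcases prim_parallel ha hb h with h' | h'
    · exact hdist.1 (by rw [hva, hwb, h'])
    · exact hdist.2.1 (by rw [hva, hwb, h', toQ_neg])
  obtain ⟨b', hb', hqpos, hbw⟩ :
      ∃ b' : ℤ × ℤ, Int.gcd b'.1 b'.2 = 1 ∧ 0 < a.1 * b'.2 - a.2 * b'.1 ∧
        (toQ b' = w ∨ toQ b' = -w) := by
    rcases hd.lt_or_gt with h | h
    · refine ⟨-b, by simpa using hb, ?_, Or.inr (by rw [toQ_neg, hwb])⟩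
      simp only [Prod.fst_neg, Prod.snd_neg, mul_neg]
      linarith
    · exact ⟨b, hb, h, Or.inl hwb.symm⟩
  set qI : ℤ := a.1 * b'.2 - a.2 * b'.1 with hqI
  set s : ℤ := Int.gcdA a.1 a.2 with hsdef
  set t : ℤ := Int.gcdB a.1 a.2 with htdef
  have hst : a.1 * s + a.2 * t = 1 := by
    have h := Int.gcd_eq_gcd_ab a.1 a.2
    rw [ha] at h
    exact_mod_cast h.symm
  set p₀ : ℤ := s * b'.1 + t * b'.2 with hp₀
  set c : ℤ := p₀ / qI with hcdef
  set pI : ℤ := p₀ % qI with hpIdef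
  have hppos : 0 ≤ pI := Int.emod_nonneg _ (ne_of_gt hqpos)
  have hplt : pI < qI := Int.emod_lt_of_pos _ hqpos
  have hpdef : qI * c + pI = p₀ := Int.mul_ediv_add_emod p₀ qI
  have hI1 : 1 ≤ I := hI.1
  have hstQ : (a.1 : ℚ) * s + (a.2 : ℚ) * t = 1 := by exact_mod_cast hst
  have hqQ : (qI : ℚ) = (a.1 : ℚ) * b'.2 - (a.2 : ℚ) * b'.1 := by exact_mod_cast hqI
  have hq0Q : (qI : ℚ) ≠ 0 := by exact_mod_cast ne_of_gt hqpos
  have hqQpos : (0:ℚ) < (qI : ℚ) := by exact_mod_cast hqpos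
  have hIQ : (0:ℚ) < (I : ℚ) := by exact_mod_cast (by omega : (0:ℤ) < I)
  clear_value qI s t p₀ c pI
  refine ⟨pI, qI, hppos, hplt, ?_, s + c * a.2, t - c * a.1, -a.2, a.1,
    Or.inl (by linear_combination hst), ?_⟩
  · -- the bound qI ≤ 4 I^2 - 1
    by_contra hq4
    push_neg at hq4
    have hq4' : 4 * I ^ 2 ≤ qI := by linarith
    have hn_pos : 0 < (2 * I - 1).toNat := by omega
    obtain ⟨j, k, hk0, hkn, hjk⟩ :=
      Real.exists_int_int_abs_mul_sub_le ((pI : ℝ) / (qI : ℝ)) hn_pos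
    have hkI : k ≤ 2 * I - 1 := by
      rwa [Int.toNat_of_nonneg (by omega)] at hkn
    have hq0R : (0:ℝ) < (qI : ℝ) := by exact_mod_cast hqpos
    have hn1 : (((2 * I - 1).toNat : ℕ) : ℝ) + 1 = 2 * (I : ℝ) := by
      have h1 : (((2 * I - 1).toNat : ℕ) : ℤ) = 2 * I - 1 := Int.toNat_of_nonneg (by omega)
      have h2 := congrArg (fun x : ℤ => (x : ℝ)) h1
      push_cast at h2 ⊢
      linarith
    have key : |k * pI - j * qI| * (2 * I) ≤ qI := by
      have h1 : ((k * pI - j * qI : ℤ) : ℝ) = ((k : ℝ) * ((pI : ℝ) / (qI : ℝ)) - (j : ℝ)) * (qI : ℝ) := by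
        field_simp
        push_cast
        ring
      have h2 : ((|k * pI - j * qI| : ℤ) : ℝ) ≤ (qI : ℝ) / (2 * (I : ℝ)) := by
        rw [Int.cast_abs, h1, abs_mul, abs_of_pos hq0R]
        calc |(k : ℝ) * ((pI : ℝ) / (qI : ℝ)) - (j : ℝ)| * (qI : ℝ)
            ≤ (1 / ((((2 * I - 1).toNat : ℕ) : ℝ) + 1)) * (qI : ℝ) :=
              mul_le_mul_of_nonneg_right hjk hq0R.le
          _ = (qI : ℝ) / (2 * (I : ℝ)) := by rw [hn1]; ring
      have hIpos : (0:ℝ) < 2 * (I : ℝ) := by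
        have : (0:ℝ) < (I : ℝ) := by exact_mod_cast (by omega : (0:ℤ) < I)
        linarith
      have h3 := (le_div_iff₀ hIpos).1 h2
      exact_mod_cast h3
    -- the lattice point
    set Z1 : ℤ := j * a.1 + k * (c * a.1 - t) with hZ1
    set Z2 : ℤ := j * a.2 + k * (s + c * a.2) with hZ2
    have hz2 : a.1 * Z2 - a.2 * Z1 = k := by
      rw [hZ1, hZ2]; linear_combination k * hst
    have hzne : (Z1, Z2) ≠ (0 : ℤ × ℤ) := by
      intro h0
      have h1 : Z1 = 0 := congrArg Prod.fst h0
      have h2 : Z2 = 0 := congrArg Prod.snd h0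
      rw [h1, h2] at hz2
      omega
    have hN1 : b'.2 * Z1 - b'.1 * Z2 = j * qI - k * pI := by
      rw [hZ1, hZ2]
      linear_combination (-j - k * c) * hqI + k * hp₀ + k * hpdef
    clear_value Z1 Z2
    -- the open set U
    set U : Set (ℚ × ℚ) :=
      {x | |((b'.2 : ℚ) * x.1 - (b'.1 : ℚ) * x.2) / (qI : ℚ)| +
        |((a.1 : ℚ) * x.2 - (a.2 : ℚ) * x.1) / (qI : ℚ)| < (I : ℚ)⁻¹} with hU
    clear_value U
    have hUopen : IsOpen U := by
      rw [hU]
      apply isOpen_lt _ continuous_const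
      apply Continuous.add
      · exact (((continuous_const.mul continuous_fst).sub
          (continuous_const.mul continuous_snd)).div_const _).abs
      · exact (((continuous_const.mul continuous_snd).sub
          (continuous_const.mul continuous_fst)).div_const _).abs
    have hUsub : U ⊆ ((I : ℚ))⁻¹ • Q := by
      intro x hx
      simp only [hU, Set.mem_setOf_eq] at hx
      set α : ℚ := ((b'.2 : ℚ) * x.1 - (b'.1 : ℚ) * x.2) / (qI : ℚ) with hα
      set β : ℚ := ((a.1 : ℚ) * x.2 - (a.2 : ℚ) * x.1) / (qI : ℚ) with hβ
      have hxrec : x = α • toQ a + β • toQ b' := by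
        have h1 : x.1 = α * a.1 + β * b'.1 := by
          rw [hα, hβ]; field_simp; linear_combination x.1 * hqQ
        have h2 : x.2 = α * a.2 + β * b'.2 := by
          rw [hα, hβ]; field_simp; linear_combination x.2 * hqQ
        refine Prod.ext ?_ ?_ <;>
          simp only [toQ, Prod.fst_add, Prod.snd_add, Prod.smul_fst, Prod.smul_snd,
            smul_eq_mul] <;> assumption
      have habs : |(I : ℚ) * α| + |(I : ℚ) * β| ≤ 1 := by
        rw [abs_mul, abs_mul, abs_of_pos hIQ]
        nlinarith [mul_lt_mul_of_pos_left hx hIQ, mul_inv_cancel₀ (ne_of_gt hIQ),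
          abs_nonneg α, abs_nonneg β]
      have hy := mem_hull4 (toQ a) (toQ b') habs
      have hsetEq : ({toQ a, toQ b', -toQ a, -toQ b'} : Set (ℚ × ℚ)) = {v, w, -v, -w} := by
        rcases hbw with h' | h'
        · rw [hva, h']
        · rw [hva, h', neg_neg]
          ext y
          simp only [Set.mem_insert_iff, Set.mem_singleton_iff]
          tauto
      rw [hsetEq] at hy
      have hPQ : convexHull ℚ ({v, w, -v, -w} : Set (ℚ × ℚ)) ⊆ Q := by
        apply convexHull_min _ hQconv
        intro y hy'
        simp only [Set.mem_insert_iff, Set.mem_singleton_iff] at hy'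
        rcases hy' with h' | h' | h' | h' <;> subst h'
        · exact extremePoints_subset hv
        · exact extremePoints_subset hw
        · exact extremePoints_subset hv'
        · exact extremePoints_subset hw'
      refine Set.mem_smul_set.2 ⟨_, hPQ hy, ?_⟩
      rw [smul_add, smul_smul, smul_smul, inv_mul_cancel_left₀ (ne_of_gt hIQ),
        inv_mul_cancel_left₀ (ne_of_gt hIQ)]
      exact hxrec.symm
    have hmem : toQ (Z1, Z2) ∈ U := by
      simp only [hU, Set.mem_setOf_eq, toQ]
      have e1 : (b'.2 : ℚ) * (Z1 : ℚ) - (b'.1 : ℚ) * (Z2 : ℚ) = ((j * qI - k * pI : ℤ) : ℚ) := by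
        exact_mod_cast congrArg (fun x : ℤ => (x : ℚ)) hN1
      have e2 : (a.1 : ℚ) * (Z2 : ℚ) - (a.2 : ℚ) * (Z1 : ℚ) = ((k : ℤ) : ℚ) := by
        exact_mod_cast congrArg (fun x : ℤ => (x : ℚ)) hz2
      rw [e1, e2]
      obtain ⟨e, he⟩ : ∃ e : ℤ, e = |j * qI - k * pI| := ⟨_, rfl⟩
      have key' : e * (2 * I) ≤ qI := by
        rw [he, abs_sub_comm]; exact key
      have hZint : (e + k) * I < qI := by
        have hk2 : k * I ≤ (2 * I - 1) * I :=
          mul_le_mul_of_nonneg_right hkI (by omega)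
        have he0 : 0 ≤ e := he ▸ abs_nonneg _
        linarith only [key', hk2, hq4', hI1, hk0]
      have hce : |((j * qI - k * pI : ℤ) : ℚ)| = (e : ℚ) := by
        rw [he]; push_cast; ring
      rw [abs_div, abs_div, abs_of_pos hqQpos, hce]
      have hck : |((k : ℤ) : ℚ)| = (k : ℚ) := by
        rw [abs_of_pos]; exact_mod_cast hk0
      rw [hck, ← add_div, inv_eq_one_div, div_lt_div_iff₀ hqQpos hIQ]
      have : ((e : ℚ) + (k : ℚ)) * (I : ℚ) < (qI : ℚ) := by exact_mod_cast hZint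
      linarith
    exact hzne (hI.2.1 (Z1, Z2) (interior_maximal hUsub hUopen hmem))
  · -- the unimodular image
    have F : (ℚ × ℚ) →ₗ[ℚ] (ℚ × ℚ) := intLinMap (s + c * a.2) (t - c * a.1) (-a.2) a.1
    have hFa : intLinMap (s + c * a.2) (t - c * a.1) (-a.2) a.1 (toQ a) = toQ (1, 0) := by
      rw [intLinMap_apply]
      simp only [toQ]
      refine Prod.ext ?_ ?_
      · push_cast; linear_combination hstQ
      · push_cast; ring
    have hFb : intLinMap (s + c * a.2) (t - c * a.1) (-a.2) a.1 (toQ b') = toQ (pI, qI) := by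
      rw [intLinMap_apply]
      simp only [toQ]
      have hpQ : ((pI : ℤ) : ℚ) = (p₀ : ℚ) - (qI : ℚ) * (c : ℚ) := by
        exact_mod_cast congrArg (fun x : ℤ => (x : ℚ)) (by omega : pI = p₀ - qI * c)
      have hp₀Q : ((p₀ : ℤ) : ℚ) = (s : ℚ) * b'.1 + (t : ℚ) * b'.2 := by exact_mod_cast hp₀
      refine Prod.ext ?_ ?_
      · push_cast
        linear_combination (-1 : ℚ) * hpQ - hp₀Q + (c : ℚ) * hqQ
      · push_cast
        linear_combination - hqQ
    have hfun : (fun x : ℚ × ℚ => (((s + c * a.2 : ℤ) : ℚ) * x.1 + ((t - c * a.1 : ℤ) : ℚ) * x.2,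
        ((-a.2 : ℤ) : ℚ) * x.1 + ((a.1 : ℤ) : ℚ) * x.2)) =
        ⇑(intLinMap (s + c * a.2) (t - c * a.1) (-a.2) a.1) := rfl
    rw [hfun, hP, (intLinMap (s + c * a.2) (t - c * a.1) (-a.2) a.1).image_convexHull]
    congr 1
    rw [show ({v, w, -v, -w} : Set (ℚ × ℚ)) = insert v (insert w (insert (-v) {-w})) from rfl]
    rw [Set.image_insert_eq, Set.image_insert_eq, Set.image_insert_eq, Set.image_singleton,
      map_neg, map_neg]
    have h1 : intLinMap (s + c * a.2) (t - c * a.1) (-a.2) a.1 v = toQ (1, 0) := by rw [hva]; exact hFa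
    have hn1 : -toQ ((1 : ℤ), (0 : ℤ)) = toQ (-1, 0) := by simp [toQ, Prod.ext_iff]
    have hn2 : -toQ (pI, qI) = toQ (-pI, -qI) := by simp [toQ, Prod.ext_iff]
    rcases hbw with h' | h'
    · have h2 : intLinMap (s + c * a.2) (t - c * a.1) (-a.2) a.1 w = toQ (pI, qI) := by rw [← h']; exact hFb
      rw [h1, h2, hn1, hn2, Set.insert_comm (toQ (pI, qI)) (toQ (-1, 0))]
    · have h2 : intLinMap (s + c * a.2) (t - c * a.1) (-a.2) a.1 w = toQ (-pI, -qI) := by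
        have : w = -toQ b' := by rw [h', neg_neg]
        rw [this, map_neg, hFb, hn2]
      rw [h1, h2, hn1]
      have hn2' : -toQ (-pI, -qI) = toQ (pI, qI) := by simp [toQ, Prod.ext_iff]
      rw [hn2', Set.insert_comm (toQ (-pI, -qI)) (toQ (-1, 0)),
        Set.pair_comm (toQ (-pI, -qI)) (toQ (pI, qI))]
end

section
/- Let Q be an LDP-polygon and let F be a special facet of Q (i.e. the sum of all vertices of Q lies in the cone pos(F) = ℝ_{≥0}·F) with local index l_F. Then Q ⊂ {v ∈ ℚ² : −l_F(l_F + 1) ≤ ⟨η_F, v⟩ ≤ l_F}. -/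
open Pointwise

section Aux

open Finset

lemma pairQ_add (η : ℤ × ℤ) (x y : ℚ × ℚ) : pairQ η (x + y) = pairQ η x + pairQ η y := by
  simp only [pairQ, Prod.fst_add, Prod.snd_add]; ring

lemma pairQ_smul (η : ℤ × ℤ) (c : ℚ) (x : ℚ × ℚ) : pairQ η (c • x) = c * pairQ η x := by
  simp only [pairQ, Prod.smul_fst, Prod.smul_snd, smul_eq_mul]; ring

/-- `pairQ η` as a linear map. -/
def pairL (η : ℤ × ℤ) : (ℚ × ℚ) →ₗ[ℚ] ℚ where
  toFun := pairQ η
  map_add' := pairQ_add η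
  map_smul' c x := by simpa using pairQ_smul η c x

/-- The rotated functional. -/
def phiQ (η : ℤ × ℤ) (x : ℚ × ℚ) : ℚ := (η.1 : ℚ) * x.2 - (η.2 : ℚ) * x.1

lemma phiQ_add (η : ℤ × ℤ) (x y : ℚ × ℚ) : phiQ η (x + y) = phiQ η x + phiQ η y := by
  simp only [phiQ, Prod.fst_add, Prod.snd_add]; ring

lemma phiQ_smul (η : ℤ × ℤ) (c : ℚ) (x : ℚ × ℚ) : phiQ η (c • x) = c * phiQ η x := by
  simp only [phiQ, Prod.smul_fst, Prod.smul_snd, smul_eq_mul]; ring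

def phiL (η : ℤ × ℤ) : (ℚ × ℚ) →ₗ[ℚ] ℚ where
  toFun := phiQ η
  map_add' := phiQ_add η
  map_smul' c x := by simpa using phiQ_smul η c x

lemma eta_ne {η : ℤ × ℤ} (h : Int.gcd η.1 η.2 = 1) : (η.1 : ℚ) ≠ 0 ∨ (η.2 : ℚ) ≠ 0 := by
  by_contra hc
  push_neg at hc
  obtain ⟨h1, h2⟩ := hc
  rw [Int.cast_eq_zero] at h1 h2
  rw [h1, h2] at h
  simp [Int.gcd] at h

lemma pair_phi_inj {η : ℤ × ℤ} (hη : (η.1 : ℚ) ≠ 0 ∨ (η.2 : ℚ) ≠ 0) {x y : ℚ × ℚ}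
    (h1 : pairQ η x = pairQ η y) (h2 : phiQ η x = phiQ η y) : x = y := by
  have hAB : (0:ℚ) < (η.1:ℚ)^2 + (η.2:ℚ)^2 := by
    rcases hη with h | h <;> positivity
  have e1 : ((η.1:ℚ)^2 + (η.2:ℚ)^2) * (x.1 - y.1)
      = (η.1:ℚ) * (pairQ η x - pairQ η y) - (η.2:ℚ) * (phiQ η x - phiQ η y) := by
    simp only [pairQ, phiQ]; ring
  have e2 : ((η.1:ℚ)^2 + (η.2:ℚ)^2) * (x.2 - y.2)
      = (η.2:ℚ) * (pairQ η x - pairQ η y) + (η.1:ℚ) * (phiQ η x - phiQ η y) := by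
    simp only [pairQ, phiQ]; ring
  rw [h1, h2] at e1 e2
  simp only [sub_self, mul_zero, sub_zero, zero_add, add_zero, zero_sub, neg_zero] at e1 e2
  have hx1 : x.1 = y.1 := by
    have := mul_eq_zero.1 e1
    rcases this with h | h
    · exact absurd h hAB.ne'
    · linarith [sub_eq_zero.1 h]
  have hx2 : x.2 = y.2 := by
    have := mul_eq_zero.1 e2
    rcases this with h | h
    · exact absurd h hAB.ne'
    · linarith [sub_eq_zero.1 h]
  exact Prod.ext hx1 hx2

lemma strict_comb {a b u v m : ℚ} (ha : 0 < a) (hb : 0 < b) (hab : a + b = 1)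
    (hu : m ≤ u) (hv : m ≤ v) (h : a * u + b * v = m) : u = m ∧ v = m := by
  have key : a * m + b * m = m := by rw [← add_mul, hab, one_mul]
  have hau : a * m ≤ a * u := mul_le_mul_of_nonneg_left hu ha.le
  have hbv : b * m ≤ b * v := mul_le_mul_of_nonneg_left hv hb.le
  have hu' : a * u = a * m := by linarith
  have hv' : b * v = b * m := by linarith
  exact ⟨by have := mul_left_cancel₀ ha.ne' hu'; linarith,
         by have := mul_left_cancel₀ hb.ne' hv'; linarith⟩

lemma face_hull (η : ℤ × ℤ) (W : Finset (ℚ × ℚ)) (m : ℚ)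
    (hm : ∀ w ∈ W, m ≤ pairQ η w) {x : ℚ × ℚ}
    (hx : x ∈ convexHull ℚ (W : Set (ℚ × ℚ))) (hfx : pairQ η x = m) :
    x ∈ convexHull ℚ ((W.filter fun w => pairQ η w = m : Finset (ℚ × ℚ)) : Set (ℚ × ℚ)) := by
  classical
  rw [Finset.convexHull_eq] at hx ⊢
  obtain ⟨w, hw0, hw1, hwc⟩ := hx
  have hxc : ∑ y ∈ W, w y • y = x := by
    rw [Finset.centerMass_eq_of_sum_1 _ _ hw1] at hwc
    simpa using hwc
  have hfsum : ∑ y ∈ W, w y * pairQ η y = m := by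
    have : pairL η (∑ y ∈ W, w y • y) = ∑ y ∈ W, w y * pairQ η y := by
      rw [map_sum]
      refine Finset.sum_congr rfl fun y _ => ?_
      show pairQ η (w y • y) = _
      rw [pairQ_smul]
    rw [hxc] at this
    rw [← this]; exact hfx
  have hfs : ∑ y ∈ W, w y * (pairQ η y - m) = 0 := by
    have : ∑ y ∈ W, w y * (pairQ η y - m)
        = (∑ y ∈ W, w y * pairQ η y) - m * (∑ y ∈ W, w y) := by
      rw [Finset.mul_sum, ← Finset.sum_sub_distrib]
      refine Finset.sum_congr rfl fun y _ => by ring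
    rw [this, hfsum, hw1, mul_one, sub_self]
  have hzero : ∀ y ∈ W, w y * (pairQ η y - m) = 0 :=
    (Finset.sum_eq_zero_iff_of_nonneg fun y hy =>
      mul_nonneg (hw0 y hy) (sub_nonneg.2 (hm y hy))).1 hfs
  have hkey : ∀ y ∈ W, y ∉ W.filter (fun w => pairQ η w = m) → w y = 0 := by
    intro y hy hny
    rw [Finset.mem_filter] at hny
    push_neg at hny
    rcases mul_eq_zero.1 (hzero y hy) with h | h
    · exact h
    · exact absurd (by linarith [sub_eq_zero.1 h]) (hny hy)
  have hw1' : ∑ y ∈ W.filter (fun w => pairQ η w = m), w y = 1 := by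
    rw [← hw1]
    exact (Finset.sum_subset (Finset.filter_subset _ _) fun y hy hny => hkey y hy hny)
  refine ⟨w, fun y hy => hw0 y (Finset.filter_subset _ _ hy), hw1', ?_⟩
  rw [Finset.centerMass_eq_of_sum_1 _ _ hw1']
  simp only [id]
  rw [← hxc]
  exact (Finset.sum_subset (Finset.filter_subset _ _) fun y hy hny => by
    rw [hkey y hy hny, zero_smul])

lemma exists_extreme_min (η : ℤ × ℤ) (hη : (η.1 : ℚ) ≠ 0 ∨ (η.2 : ℚ) ≠ 0)
    (W : Finset (ℚ × ℚ)) (m : ℚ) (hm : ∀ w ∈ W, m ≤ pairQ η w)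
    (hatt : ∃ w ∈ W, pairQ η w = m) :
    ∃ p ∈ Set.extremePoints ℚ (convexHull ℚ (W : Set (ℚ × ℚ))), pairQ η p = m := by
  classical
  set Q := convexHull ℚ (W : Set (ℚ × ℚ)) with hQdef
  have hQm : ∀ q ∈ Q, m ≤ pairQ η q := by
    intro q hq
    have hconv : Convex ℚ {x : ℚ × ℚ | m ≤ pairL η x} :=
      convex_halfSpace_ge (pairL η).isLinear m
    exact convexHull_min (fun w hw => hm w hw) hconv hq
  set W1 := W.filter (fun w => pairQ η w = m) with hW1def
  obtain ⟨w0, hw0W, hw0⟩ := hatt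
  have hW1ne : W1.Nonempty := ⟨w0, Finset.mem_filter.2 ⟨hw0W, hw0⟩⟩
  have hW1im : (W1.image (phiQ η)).Nonempty := hW1ne.image _
  set m2 := (W1.image (phiQ η)).min' hW1im with hm2def
  have hm2 : ∀ w ∈ W1, m2 ≤ phiQ η w := fun w hw =>
    Finset.min'_le _ _ (Finset.mem_image_of_mem _ hw)
  obtain ⟨p, hpW1, hp2⟩ : ∃ p ∈ W1, phiQ η p = m2 := by
    have := (W1.image (phiQ η)).min'_mem hW1im
    rw [Finset.mem_image] at this
    obtain ⟨p, h1, h2⟩ := this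
    exact ⟨p, h1, h2⟩
  have hpW : p ∈ W := (Finset.mem_filter.1 hpW1).1
  have hp1 : pairQ η p = m := (Finset.mem_filter.1 hpW1).2
  have hullW1 : ∀ {x : ℚ × ℚ}, x ∈ convexHull ℚ (W1 : Set (ℚ × ℚ)) → m2 ≤ phiQ η x := by
    intro x hx
    have hconv : Convex ℚ {x : ℚ × ℚ | m2 ≤ phiL η x} :=
      convex_halfSpace_ge (phiL η).isLinear m2
    exact convexHull_min (fun w hw => hm2 w hw) hconv hx
  refine ⟨p, ?_, hp1⟩
  rw [mem_extremePoints]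
  refine ⟨subset_convexHull ℚ _ hpW, ?_⟩
  rintro x hx y hy ⟨a, b, ha, hb, hab, habp⟩
  have hpairc : a * pairQ η x + b * pairQ η y = m := by
    rw [← hp1, ← habp, pairQ_add, pairQ_smul, pairQ_smul]
  obtain ⟨hxm, hym⟩ := strict_comb ha hb hab (hQm x hx) (hQm y hy) hpairc
  have hxW1 : x ∈ convexHull ℚ (W1 : Set (ℚ × ℚ)) := face_hull η W m hm hx hxm
  have hyW1 : y ∈ convexHull ℚ (W1 : Set (ℚ × ℚ)) := face_hull η W m hm hy hym
  have hphic : a * phiQ η x + b * phiQ η y = m2 := by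
    rw [← hp2, ← habp, phiQ_add, phiQ_smul, phiQ_smul]
  obtain ⟨hx2, hy2⟩ := strict_comb ha hb hab (hullW1 hxW1) (hullW1 hyW1) hphic
  constructor
  · exact pair_phi_inj hη (hxm.trans hp1.symm) (hx2.trans hp2.symm)
  · exact pair_phi_inj hη (hym.trans hp1.symm) (hy2.trans hp2.symm)


lemma mid_lemma (Qs : Set (ℚ × ℚ)) (η : ℤ × ℤ) (hη : (η.1 : ℚ) ≠ 0 ∨ (η.2 : ℚ) ≠ 0) (c : ℚ)
    (x y z : ℚ × ℚ) (hx : x ∈ Qs) (hz : z ∈ Qs) (hy : y ∈ Set.extremePoints ℚ Qs)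
    (hpx : pairQ η x = c) (hpy : pairQ η y = c) (hpz : pairQ η z = c)
    (h1 : phiQ η x < phiQ η y) (h2 : phiQ η y < phiQ η z) (hxy : x ≠ y) : False := by
  set d := phiQ η z - phiQ η x with hd
  have hdpos : 0 < d := by rw [hd]; linarith
  set a := (phiQ η z - phiQ η y) / d with hadef
  set b := (phiQ η y - phiQ η x) / d with hbdef
  have ha : 0 < a := div_pos (by linarith) hdpos
  have hb : 0 < b := div_pos (by linarith) hdpos
  have hab : a + b = 1 := by
    rw [hadef, hbdef, ← add_div, hd, div_eq_one_iff_eq hdpos.ne']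
    ring
  have hyeq : a • x + b • z = y := by
    apply pair_phi_inj hη
    · rw [pairQ_add, pairQ_smul, pairQ_smul, hpx, hpz, hpy]
      linear_combination c * hab
    · rw [phiQ_add, phiQ_smul, phiQ_smul, hadef, hbdef]
      field_simp
      ring
  have := hy.2 hx hz ⟨a, b, ha, hb, hab, hyeq⟩
  exact hxy this

lemma fiber_card_le (Qs : Set (ℚ × ℚ)) (η : ℤ × ℤ)
    (hη : (η.1 : ℚ) ≠ 0 ∨ (η.2 : ℚ) ≠ 0) (T : Finset (ℚ × ℚ))
    (hT : ∀ v ∈ T, v ∈ Set.extremePoints ℚ Qs) (c : ℚ)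
    (hc : ∀ v ∈ T, pairQ η v = c) : T.card ≤ 2 := by
  classical
  by_contra hcard
  push_neg at hcard
  obtain ⟨v1, hv1⟩ := Finset.card_pos.1 (show 0 < T.card by omega)
  have h2 : 0 < (T.erase v1).card := by
    rw [Finset.card_erase_of_mem hv1]; omega
  obtain ⟨v2, hv2⟩ := Finset.card_pos.1 h2
  have h3 : 0 < ((T.erase v1).erase v2).card := by
    rw [Finset.card_erase_of_mem hv2, Finset.card_erase_of_mem hv1]; omega
  obtain ⟨v3, hv3⟩ := Finset.card_pos.1 h3
  obtain ⟨d32, hv3'⟩ := Finset.mem_erase.1 hv3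
  obtain ⟨d31, hv3T⟩ := Finset.mem_erase.1 hv3'
  obtain ⟨d21, hv2T⟩ := Finset.mem_erase.1 hv2
  have e1 := hT v1 hv1
  have e2 := hT v2 hv2T
  have e3 := hT v3 hv3T
  have m1 := e1.1
  have m2 := e2.1
  have m3 := e3.1
  have p1 := hc v1 hv1
  have p2 := hc v2 hv2T
  have p3 := hc v3 hv3T
  have f12 : phiQ η v1 ≠ phiQ η v2 := fun h =>
    d21 (pair_phi_inj hη (p2.trans p1.symm) h.symm)
  have f13 : phiQ η v1 ≠ phiQ η v3 := fun h =>
    d31 (pair_phi_inj hη (p3.trans p1.symm) h.symm)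
  have f23 : phiQ η v2 ≠ phiQ η v3 := fun h =>
    d32 (pair_phi_inj hη (p3.trans p2.symm) h.symm)
  rcases f12.lt_or_gt with h12 | h12 <;>
    rcases f13.lt_or_gt with h13 | h13 <;>
      rcases f23.lt_or_gt with h23 | h23
  · exact mid_lemma Qs η hη c v1 v2 v3 m1 m3 e2 p1 p2 p3 h12 h23 d21.symm
  · exact mid_lemma Qs η hη c v1 v3 v2 m1 m2 e3 p1 p3 p2 h13 h23 d31.symm
  · linarith
  · exact mid_lemma Qs η hη c v3 v1 v2 m3 m2 e1 p3 p1 p2 h13 h12 d31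
  · exact mid_lemma Qs η hη c v2 v1 v3 m2 m3 e1 p2 p1 p3 h12 h13 d21
  · linarith
  · exact mid_lemma Qs η hη c v2 v3 v1 m2 m1 e3 p2 p3 p1 h23 h13 d32.symm
  · exact mid_lemma Qs η hη c v3 v2 v1 m3 m1 e2 p3 p2 p1 h23 h12 d32

lemma icc_insert (n : ℕ) :
    Finset.Icc (1:ℤ) ((n:ℤ) + 1) = insert ((n:ℤ) + 1) (Finset.Icc (1:ℤ) (n:ℤ)) := by
  ext x
  simp only [Finset.mem_Icc, Finset.mem_insert]
  omega

lemma gauss_sum (n : ℕ) : ∑ h ∈ Finset.Icc (1:ℤ) (n:ℤ), 2 * h = (n:ℤ) * ((n:ℤ) + 1) := by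
  induction n with
  | zero => simp
  | succ k ih =>
    push_cast
    rw [icc_insert k, Finset.sum_insert (by simp only [Finset.mem_Icc]; omega), ih]
    ring

end Aux

/-- If `F` is a special facet of an LDP-polygon `Q` (the sum of the vertices of `Q`
lies in `pos(F)`) with local index `l`, then
`Q ⊆ {v : −l(l+1) ≤ ⟨η_F, v⟩ ≤ l}`. -/
theorem special_facet_bound
    (Q F : Set (ℚ × ℚ)) (η : ℤ × ℤ) (l : ℤ)
    (hQ : IsLDPPolygon Q) (hF : IsFacetWith Q η l F)
    (V : Finset (ℚ × ℚ)) (hV : (V : Set (ℚ × ℚ)) = vertices Q)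
    (hspecial : (∑ v ∈ V, v) ∈ posCone F) :
    Q ⊆ {v : ℚ × ℚ | -(l : ℚ) * ((l : ℚ) + 1) ≤ pairQ η v ∧ pairQ η v ≤ (l : ℚ)} := by
  classical
  obtain ⟨⟨⟨⟨S, hS⟩, -⟩, h0⟩, hlat⟩ := hQ
  obtain ⟨hgcd, hl, hub, hFeq, -⟩ := hF
  have hη := eta_ne hgcd
  set W : Finset (ℚ × ℚ) := S.image toQ with hW
  have hQW : Q = convexHull ℚ (W : Set (ℚ × ℚ)) := by
    rw [hS, hW, Finset.coe_image]
  have h0Q : (0 : ℚ × ℚ) ∈ Q := interior_subset h0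
  have hWne : W.Nonempty := by
    rcases Finset.eq_empty_or_nonempty W with h | h
    · exfalso
      rw [h] at hQW
      simp only [Finset.coe_empty, convexHull_empty] at hQW
      rw [hQW] at h0Q
      exact h0Q
    · exact h
  have him : (W.image (pairQ η)).Nonempty := hWne.image _
  set m := (W.image (pairQ η)).min' him with hmdef
  have hmW : ∀ w ∈ W, m ≤ pairQ η w := fun w hw =>
    Finset.min'_le _ _ (Finset.mem_image_of_mem _ hw)
  have hatt : ∃ w ∈ W, pairQ η w = m := by
    have := (W.image (pairQ η)).min'_mem him
    rw [Finset.mem_image] at this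
    exact this
  have hQm : ∀ q ∈ Q, m ≤ pairQ η q := by
    intro q hq
    rw [hQW] at hq
    exact convexHull_min (fun w hw => hmW w hw)
      (convex_halfSpace_ge (pairL η).isLinear m) hq
  obtain ⟨p, hpext, hpm⟩ := exists_extreme_min η hη W m hmW hatt
  rw [← hQW] at hpext
  have hpV : p ∈ V := by
    rw [← Finset.mem_coe, hV]
    exact hpext
  set H : (ℚ × ℚ) → ℤ := fun v => (pairQ η v).num with hHdef
  have hHV : ∀ v ∈ V, ((H v : ℤ) : ℚ) = pairQ η v := by
    intro v hv
    have hvert : v ∈ vertices Q := by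
      rw [← hV]
      exact Finset.mem_coe.2 hv
    obtain ⟨pp, -, hveq⟩ := hlat v hvert
    have hint : pairQ η v = ((η.1 * pp.1 + η.2 * pp.2 : ℤ) : ℚ) := by
      rw [hveq]
      simp only [pairQ, toQ]
      push_cast
      ring
    show ((pairQ η v).num : ℚ) = pairQ η v
    rw [hint, Rat.num_intCast]
  have hVQmem : ∀ v ∈ V, v ∈ Q := by
    intro v hv
    have hvert : v ∈ vertices Q := by
      rw [← hV]
      exact Finset.mem_coe.2 hv
    exact extremePoints_subset hvert
  have hVub : ∀ v ∈ V, H v ≤ l := by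
    intro v hv
    have h1 := hub v (hVQmem v hv)
    rw [← hHV v hv] at h1
    exact_mod_cast h1
  obtain ⟨t, ht, z, hzF, hze⟩ := hspecial
  have hzQ : pairQ η z = (l : ℚ) := by
    rw [hFeq] at hzF
    exact hzF.2
  have hsumQ : ∑ v ∈ V, pairQ η v = t * l := by
    have h1 : pairL η (∑ v ∈ V, v) = ∑ v ∈ V, pairQ η v := map_sum (pairL η) (fun v => v) V
    rw [← h1]
    show pairQ η (∑ v ∈ V, v) = t * l
    rw [hze, pairQ_smul, hzQ]
  have hHsum : 0 ≤ ∑ v ∈ V, H v := by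
    have h2 : ((∑ v ∈ V, H v : ℤ) : ℚ) = t * l := by
      push_cast
      rw [Finset.sum_congr rfl hHV, hsumQ]
    have h3 : (0 : ℚ) ≤ t * l := mul_nonneg ht (by exact_mod_cast hl.le)
    rw [← h2] at h3
    exact_mod_cast h3
  have hHp : ((H p : ℤ) : ℚ) = m := by rw [hHV p hpV, hpm]
  have hm0 : m ≤ 0 := by
    have := hQm 0 h0Q
    simpa [pairQ] using this
  have hHp0 : H p ≤ 0 := by
    have h4 : ((H p : ℤ) : ℚ) ≤ 0 := by rw [hHp]; exact hm0
    exact_mod_cast h4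
  have hfiber : ∀ h : ℤ, (V.filter (fun v => H v = h)).card ≤ 2 := by
    intro h
    refine fiber_card_le Q η hη (V.filter (fun v => H v = h)) ?_ ((h : ℤ) : ℚ) ?_
    · intro v hv
      show v ∈ vertices Q
      rw [← hV]
      exact Finset.mem_coe.2 (Finset.filter_subset _ _ hv)
    · intro v hv
      obtain ⟨hvV, hvh⟩ := Finset.mem_filter.1 hv
      rw [← hHV v hvV, hvh]
  set P := V.filter (fun v => 0 < H v) with hPdef
  have hsplit : ∑ v ∈ P, H v + ∑ v ∈ V.filter (fun v => ¬ 0 < H v), H v = ∑ v ∈ V, H v :=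
    Finset.sum_filter_add_sum_filter_not V _ H
  have hPb : ∑ v ∈ P, H v ≤ l * (l + 1) := by
    have hmaps : ∀ v ∈ P, H v ∈ Finset.Icc (1 : ℤ) l := by
      intro v hv
      obtain ⟨hvV, hvp⟩ := Finset.mem_filter.1 hv
      rw [Finset.mem_Icc]
      exact ⟨hvp, hVub v hvV⟩
    rw [← Finset.sum_fiberwise_of_maps_to hmaps H]
    have hstep : ∀ h ∈ Finset.Icc (1 : ℤ) l,
        ∑ v ∈ P.filter (fun v => H v = h), H v ≤ 2 * h := by
      intro h hh
      have h1 : (1 : ℤ) ≤ h := (Finset.mem_Icc.1 hh).1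
      have hcard : (P.filter (fun v => H v = h)).card ≤ 2 := by
        refine le_trans (Finset.card_le_card ?_) (hfiber h)
        intro v hv
        obtain ⟨hvP, hvh⟩ := Finset.mem_filter.1 hv
        exact Finset.mem_filter.2 ⟨(Finset.mem_filter.1 hvP).1, hvh⟩
      have heq : ∑ v ∈ P.filter (fun v => H v = h), H v
          = ((P.filter (fun v => H v = h)).card : ℤ) * h := by
        rw [Finset.sum_congr rfl (fun v hv => (Finset.mem_filter.1 hv).2),
          Finset.sum_const, nsmul_eq_mul]
      rw [heq]
      exact mul_le_mul_of_nonneg_right (by exact_mod_cast hcard) (by linarith)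
    calc ∑ h ∈ Finset.Icc (1 : ℤ) l, ∑ v ∈ P.filter (fun v => H v = h), H v
        ≤ ∑ h ∈ Finset.Icc (1 : ℤ) l, 2 * h := Finset.sum_le_sum hstep
      _ = l * (l + 1) := by
          have hln : l = ((l.toNat : ℕ) : ℤ) := (Int.toNat_of_nonneg hl.le).symm
          rw [hln]
          exact gauss_sum l.toNat
  have hrest : ∑ v ∈ V.filter (fun v => ¬ 0 < H v), H v ≤ H p := by
    have hpmem : p ∈ V.filter (fun v => ¬ 0 < H v) :=
      Finset.mem_filter.2 ⟨hpV, by omega⟩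
    have h5 := Finset.add_sum_erase _ H hpmem
    have h6 : ∑ v ∈ (V.filter (fun v => ¬ 0 < H v)).erase p, H v ≤ 0 :=
      Finset.sum_nonpos fun v hv => by
        have := (Finset.mem_filter.1 (Finset.mem_erase.1 hv).2).2
        omega
    linarith [h5, h6]
  have hHpge : -(l * (l + 1)) ≤ H p := by linarith [hHsum, hsplit, hPb, hrest]
  intro v hv
  refine ⟨?_, hub v hv⟩
  have h1 : m ≤ pairQ η v := hQm v hv
  have h2 : ((-(l * (l + 1)) : ℤ) : ℚ) ≤ ((H p : ℤ) : ℚ) := by exact_mod_cast hHpge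
  rw [hHp] at h2
  have h3 : -(l : ℚ) * ((l : ℚ) + 1) = ((-(l * (l + 1)) : ℤ) : ℚ) := by
    push_cast
    ring
  rw [h3]
  linarith
end

section
/- Let Q be an LDP-polygon with index ℓ_Q and let F be a facet of Q with local index l_F. Then |F ∩ ℤ²| ≤ 2·ℓ_Q·(l_F + 1) + 1. Moreover, if F = conv{(a, l_F), (b, l_F)} with −l_F < a ≤ 0 < b, then Q ⊂ {(x,y) ∈ ℚ² : −l_F·x + (ℓ_Q + a)·y ≤ l_F·ℓ_Q and l_F·x + (ℓ_Q − b)·y ≤ l_F·ℓ_Q}. -/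
open Pointwise

-- auxiliary defs
def PosDir (Q : Set (ℚ × ℚ)) : Prop := ∀ n : ℤ × ℤ, n ≠ 0 → ∃ x ∈ Q, 0 < pairQ n x
def FacetDvd (Q : Set (ℚ × ℚ)) (ℓ : ℤ) : Prop := ∀ F η l, IsFacetWith Q η l F → l ∣ ℓ

lemma pairQ_isLinear (n : ℤ × ℤ) : IsLinearMap ℚ (pairQ n) := by
  constructor
  · intro x y; simp [pairQ, Prod.fst_add, Prod.snd_add]; ring
  · intro c x; simp [pairQ, Prod.smul_fst, Prod.smul_snd, smul_eq_mul]; ring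

lemma hull_le {S : Finset (ℤ × ℤ)} {Q : Set (ℚ × ℚ)}
    (hQ : Q = convexHull ℚ (toQ '' (S : Set (ℤ × ℤ)))) (n : ℤ × ℤ) (c : ℚ)
    (h : ∀ s ∈ S, pairQ n (toQ s) ≤ c) : ∀ x ∈ Q, pairQ n x ≤ c := by
  intro x hx
  rw [hQ] at hx
  have : convexHull ℚ (toQ '' (S : Set (ℤ × ℤ))) ⊆ {w | pairQ n w ≤ c} := by
    apply convexHull_min
    · rintro _ ⟨s, hs, rfl⟩; exact h s hs
    · exact convex_halfSpace_le (pairQ_isLinear n) c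
  exact this hx

lemma mem_hull {S : Finset (ℤ × ℤ)} {Q : Set (ℚ × ℚ)}
    (hQ : Q = convexHull ℚ (toQ '' (S : Set (ℤ × ℤ)))) {s : ℤ × ℤ} (hs : s ∈ S) :
    toQ s ∈ Q := by
  rw [hQ]; exact subset_convexHull ℚ _ ⟨s, hs, rfl⟩

lemma posDir_of_interior {Q : Set (ℚ × ℚ)} (h0 : (0 : ℚ × ℚ) ∈ interior Q) : PosDir Q := by
  intro n hn
  have hd : Filter.Tendsto (fun t : ℚ => t • toQ n) (nhds 0) (nhds 0) := by
    have : Continuous (fun t : ℚ => t • toQ n) := continuous_id.smul continuous_const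
    have := this.tendsto 0
    simpa using this
  have hQn : Q ∈ nhds (0 : ℚ × ℚ) :=
    mem_interior_iff_mem_nhds.mp h0
  have hev : ∀ᶠ t : ℚ in nhdsWithin 0 (Set.Ioi 0), t • toQ n ∈ Q :=
    (hd.mono_left nhdsWithin_le_nhds).eventually_mem hQn
  obtain ⟨t, htQ, ht⟩ := (hev.and self_mem_nhdsWithin).exists
  refine ⟨t • toQ n, htQ, ?_⟩
  have hnn : (0:ℚ) < (n.1:ℚ)^2 + (n.2:ℚ)^2 := by
    have : n.1 ≠ 0 ∨ n.2 ≠ 0 := by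
      by_contra hc
      push_neg at hc
      exact hn (Prod.ext hc.1 hc.2)
    rcases this with h1 | h2
    · have : (0:ℚ) < (n.1:ℚ)^2 := by positivity
      nlinarith [sq_nonneg ((n.2:ℚ))]
    · have : (0:ℚ) < (n.2:ℚ)^2 := by positivity
      nlinarith [sq_nonneg ((n.1:ℚ))]
  have : pairQ n (t • toQ n) = t * ((n.1:ℚ)^2 + (n.2:ℚ)^2) := by
    simp [pairQ, toQ, Prod.smul_fst, Prod.smul_snd, smul_eq_mul]; ring
  rw [this]
  have ht' : (0:ℚ) < t := ht
  positivity

-- core: construct a supporting integer line at the left endpoint (c,l) of the top edge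
lemma core_support (S : Finset (ℤ × ℤ)) (c l : ℤ)
    (hle : ∀ s ∈ S, s.2 ≤ l)
    (hline : ∀ s ∈ S, s.2 = l → c ≤ s.1)
    (hlow : ∃ s ∈ S, s.2 < l) :
    ∃ p q : ℤ, p < 0 ∧ (∀ s ∈ S, p * s.1 + q * s.2 ≤ p * c + q * l) ∧
      ∃ s ∈ S, s.2 < l ∧ p * s.1 + q * s.2 = p * c + q * l := by
  classical
  set T := S.filter (fun s => s.2 < l) with hT
  have hTne : T.Nonempty := by
    obtain ⟨s, hs, h2⟩ := hlow
    exact ⟨s, Finset.mem_filter.mpr ⟨hs, h2⟩⟩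
  obtain ⟨s0, hs0, hmin⟩ := T.exists_min_image
    (fun s => ((s.1 - c : ℤ) : ℚ) / ((l - s.2 : ℤ) : ℚ)) hTne
  have hs0S : s0 ∈ S := (Finset.mem_filter.mp hs0).1
  have hs0l : s0.2 < l := (Finset.mem_filter.mp hs0).2
  refine ⟨s0.2 - l, c - s0.1, by omega, ?_, s0, hs0S, hs0l, by ring⟩
  intro s hs
  rcases lt_or_eq_of_le (hle s hs) with h2 | h2
  · -- s below the line
    have hsT : s ∈ T := Finset.mem_filter.mpr ⟨hs, h2⟩
    have := hmin s hsT
    have hd0 : (0:ℚ) < ((l - s0.2 : ℤ) : ℚ) := by exact_mod_cast (by omega : (0:ℤ) < l - s0.2)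
    have hd : (0:ℚ) < ((l - s.2 : ℤ) : ℚ) := by exact_mod_cast (by omega : (0:ℤ) < l - s.2)
    rw [div_le_div_iff₀ hd0 hd] at this
    have hZ : (s0.1 - c) * (l - s.2) ≤ (s.1 - c) * (l - s0.2) := by exact_mod_cast this
    nlinarith [hZ]
  · -- s on the line
    have h1 : c ≤ s.1 := hline s hs h2
    obtain ⟨s1, s2⟩ := s
    simp only at h1 h2 ⊢
    subst h2
    nlinarith [mul_nonneg (by omega : (0:ℤ) ≤ s1 - c) (by omega : (0:ℤ) ≤ s2 - s0.2)]

lemma pairQ_toQ (n s : ℤ × ℤ) : pairQ n (toQ s) = ((n.1 * s.1 + n.2 * s.2 : ℤ) : ℚ) := by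
  simp [pairQ, toQ]

lemma package {S : Finset (ℤ × ℤ)} {Q : Set (ℚ × ℚ)}
    (hQ : Q = convexHull ℚ (toQ '' (S : Set (ℤ × ℤ)))) (hpos : PosDir Q)
    (p q c l : ℤ) (hp : p ≠ 0)
    (hsupp : ∀ s ∈ S, p * s.1 + q * s.2 ≤ p * c + q * l)
    (heq : ∃ s ∈ S, s.2 < l ∧ p * s.1 + q * s.2 = p * c + q * l)
    (hcQ : toQ (c, l) ∈ Q) :
    ∃ p' q' l₀ g : ℤ, 0 < g ∧ p = g * p' ∧ q = g * q' ∧ p' * c + q' * l = l₀ ∧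
      IsFacetWith Q (p', q') l₀ {x ∈ Q | pairQ (p', q') x = (l₀ : ℚ)} := by
  classical
  set g : ℤ := (Int.gcd p q : ℤ) with hg
  have hgpos : 0 < g := by
    have h := (Int.gcd_pos_iff (a := p) (b := q)).mpr (Or.inl hp)
    rw [hg]; exact_mod_cast h
  have hdvdp : g ∣ p := Int.gcd_dvd_left p q
  have hdvdq : g ∣ q := Int.gcd_dvd_right p q
  set p' : ℤ := p / g with hp'
  set q' : ℤ := q / g with hq'
  have hpe : p = g * p' := (Int.mul_ediv_cancel' hdvdp).symm
  have hqe : q = g * q' := (Int.mul_ediv_cancel' hdvdq).symm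
  have hgcd1 : Int.gcd p' q' = 1 := Int.gcd_div_gcd_div_gcd (by
    rw [hg] at hgpos; exact_mod_cast hgpos)
  set l₀ : ℤ := p' * c + q' * l with hl₀
  have hp'0 : p' ≠ 0 := by
    intro h; apply hp; rw [hpe, h, mul_zero]
  -- support on S for primitive normal
  have hsupp' : ∀ s ∈ S, p' * s.1 + q' * s.2 ≤ l₀ := by
    intro s hs
    have := hsupp s hs
    rw [hpe, hqe] at this
    have h2 : g * (p' * s.1 + q' * s.2) ≤ g * (p' * c + q' * l) := by ring_nf; ring_nf at this; linarith
    exact le_of_mul_le_mul_left h2 hgpos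
  have hsuppQ : ∀ x ∈ Q, pairQ (p', q') x ≤ (l₀ : ℚ) := by
    apply hull_le hQ
    intro s hs
    have := hsupp' s hs
    rw [pairQ_toQ]
    exact_mod_cast this
  have hl₀pos : 0 < l₀ := by
    obtain ⟨x, hxQ, hx⟩ := hpos (p', q') (by
      intro h
      apply hp'0
      have := congrArg Prod.fst h
      simpa using this)
    have := hsuppQ x hxQ
    have : (0:ℚ) < (l₀ : ℚ) := lt_of_lt_of_le hx this
    exact_mod_cast this
  obtain ⟨s, hsS, hsl, hseq⟩ := heq
  have hseq' : p' * s.1 + q' * s.2 = l₀ := by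
    rw [hpe, hqe] at hseq
    have h2 : g * (p' * s.1 + q' * s.2) = g * (p' * c + q' * l) := by ring_nf; ring_nf at hseq; linarith
    exact mul_left_cancel₀ (ne_of_gt hgpos) h2
  refine ⟨p', q', l₀, g, hgpos, hpe, hqe, rfl, hgcd1, hl₀pos, hsuppQ, rfl, ?_⟩
  refine ⟨toQ (c, l), ⟨hcQ, by rw [pairQ_toQ]⟩,
    toQ s, ⟨mem_hull hQ hsS, by rw [pairQ_toQ]; exact_mod_cast hseq'⟩, ?_⟩
  intro hcontra
  have : ((l : ℤ) : ℚ) = ((s.2 : ℤ) : ℚ) := congrArg Prod.snd hcontra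
  have : l = s.2 := by exact_mod_cast this
  omega

lemma exists_neg {S : Finset (ℤ × ℤ)} {Q : Set (ℚ × ℚ)}
    (hQ : Q = convexHull ℚ (toQ '' (S : Set (ℤ × ℤ)))) (hpos : PosDir Q) :
    ∃ s ∈ S, s.2 ≤ -1 := by
  by_contra hc
  push_neg at hc
  have h : ∀ s ∈ S, pairQ (0, -1) (toQ s) ≤ (0 : ℚ) := by
    intro s hs
    rw [pairQ_toQ]
    have := hc s hs
    exact_mod_cast (by omega : (0 * s.1 + -1 * s.2 : ℤ) ≤ 0)
  obtain ⟨x, hxQ, hx⟩ := hpos (0, -1) (by simp)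
  exact absurd (hull_le hQ (0, -1) 0 h x hxQ) (not_le.mpr hx)

lemma facet_left {S : Finset (ℤ × ℤ)} {Q : Set (ℚ × ℚ)}
    (hQ : Q = convexHull ℚ (toQ '' (S : Set (ℤ × ℤ)))) (hpos : PosDir Q)
    (a l : ℤ)
    (hle : ∀ s ∈ S, s.2 ≤ l)
    (hline : ∀ s ∈ S, s.2 = l → a ≤ s.1)
    (hlow : ∃ s ∈ S, s.2 < l)
    (haQ : toQ (a, l) ∈ Q) :
    ∃ p q l₀ : ℤ, p < 0 ∧ p * a + q * l = l₀ ∧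
      IsFacetWith Q (p, q) l₀ {x ∈ Q | pairQ (p, q) x = (l₀ : ℚ)} := by
  obtain ⟨p, q, hp, hsupp, heq⟩ := core_support S a l hle hline hlow
  obtain ⟨p', q', l₀, g, hg, hpe, hqe, hrel, hfac⟩ :=
    package hQ hpos p q a l (by omega) hsupp heq haQ
  refine ⟨p', q', l₀, ?_, hrel, hfac⟩
  nlinarith [hg, hp, hpe]

lemma facet_right {S : Finset (ℤ × ℤ)} {Q : Set (ℚ × ℚ)}
    (hQ : Q = convexHull ℚ (toQ '' (S : Set (ℤ × ℤ)))) (hpos : PosDir Q)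
    (b l : ℤ)
    (hle : ∀ s ∈ S, s.2 ≤ l)
    (hline : ∀ s ∈ S, s.2 = l → s.1 ≤ b)
    (hlow : ∃ s ∈ S, s.2 < l)
    (hbQ : toQ (b, l) ∈ Q) :
    ∃ p q l₀ : ℤ, 0 < p ∧ p * b + q * l = l₀ ∧
      IsFacetWith Q (p, q) l₀ {x ∈ Q | pairQ (p, q) x = (l₀ : ℚ)} := by
  classical
  set S' : Finset (ℤ × ℤ) := S.image (fun s => (-s.1, s.2)) with hS'
  have hmem : ∀ s' ∈ S', ∃ s ∈ S, s' = (-s.1, s.2) := by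
    intro s' hs'
    obtain ⟨s, hs, he⟩ := Finset.mem_image.mp hs'
    exact ⟨s, hs, he.symm⟩
  obtain ⟨p, q, hp, hsupp, heq⟩ := core_support S' (-b) l
    (by intro s' hs'; obtain ⟨s, hs, rfl⟩ := hmem s' hs'; exact hle s hs)
    (by intro s' hs' h2; obtain ⟨s, hs, rfl⟩ := hmem s' hs'
        simp only at h2 ⊢
        have := hline s hs h2; omega)
    (by obtain ⟨s, hs, h2⟩ := hlow; exact ⟨(-s.1, s.2), Finset.mem_image.mpr ⟨s, hs, rfl⟩, h2⟩)
  -- translate back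
  have hsupp2 : ∀ s ∈ S, (-p) * s.1 + q * s.2 ≤ (-p) * b + q * l := by
    intro s hs
    have := hsupp (-s.1, s.2) (Finset.mem_image.mpr ⟨s, hs, rfl⟩)
    simp only at this
    linarith
  have heq2 : ∃ s ∈ S, s.2 < l ∧ (-p) * s.1 + q * s.2 = (-p) * b + q * l := by
    obtain ⟨s', hs', h2, he⟩ := heq
    obtain ⟨s, hs, rfl⟩ := hmem s' hs'
    simp only at h2 he
    exact ⟨s, hs, h2, by linarith⟩
  obtain ⟨p', q', l₀, g, hg, hpe, hqe, hrel, hfac⟩ :=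
    package hQ hpos (-p) q b l (by omega) hsupp2 heq2 hbQ
  refine ⟨p', q', l₀, ?_, hrel, hfac⟩
  nlinarith [hg, hp, hpe]

lemma main_halfspaces {S : Finset (ℤ × ℤ)} {Q : Set (ℚ × ℚ)} {ℓ : ℤ}
    (hQ : Q = convexHull ℚ (toQ '' (S : Set (ℤ × ℤ)))) (hpos : PosDir Q)
    (hdvd : FacetDvd Q ℓ) (hℓ : 0 < ℓ) (l a b : ℤ) (hl : 0 < l)
    (hQle : ∀ x ∈ Q, x.2 ≤ (l : ℚ))
    (haQ : toQ (a, l) ∈ Q) (hbQ : toQ (b, l) ∈ Q)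
    (hline : ∀ s ∈ S, s.2 = l → a ≤ s.1 ∧ s.1 ≤ b) :
    ∀ v ∈ Q, -(l : ℚ) * v.1 + ((ℓ : ℚ) + (a : ℚ)) * v.2 ≤ (l : ℚ) * (ℓ : ℚ) ∧
      (l : ℚ) * v.1 + ((ℓ : ℚ) - (b : ℚ)) * v.2 ≤ (l : ℚ) * (ℓ : ℚ) := by
  have hSle : ∀ s ∈ S, s.2 ≤ l := by
    intro s hs
    have := hQle (toQ s) (mem_hull hQ hs)
    simp only [toQ] at this
    exact_mod_cast this
  have hlow : ∃ s ∈ S, s.2 < l := by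
    obtain ⟨s, hs, h2⟩ := exists_neg hQ hpos
    exact ⟨s, hs, by omega⟩
  obtain ⟨p, q, l₀, hp, hpa, hfacL⟩ :=
    facet_left hQ hpos a l hSle (fun s hs h => (hline s hs h).1) hlow haQ
  obtain ⟨P, R, L₀, hP, hPb, hfacR⟩ :=
    facet_right hQ hpos b l hSle (fun s hs h => (hline s hs h).2) hlow hbQ
  have hl₀ℓ : l₀ ≤ ℓ := Int.le_of_dvd hℓ (hdvd _ _ _ hfacL)
  have hL₀ℓ : L₀ ≤ ℓ := Int.le_of_dvd hℓ (hdvd _ _ _ hfacR)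
  have hl₀pos : 0 < l₀ := hfacL.2.1
  have hL₀pos : 0 < L₀ := hfacR.2.1
  intro v hv
  have hsuppL : (p : ℚ) * v.1 + (q : ℚ) * v.2 ≤ (l₀ : ℚ) := hfacL.2.2.1 v hv
  have hsuppR : (P : ℚ) * v.1 + (R : ℚ) * v.2 ≤ (L₀ : ℚ) := hfacR.2.2.1 v hv
  have hv2 : v.2 ≤ (l : ℚ) := hQle v hv
  -- rational versions of the integer facts
  have hpaQ : (p : ℚ) * a + (q : ℚ) * l = (l₀ : ℚ) := by exact_mod_cast hpa
  have hPbQ : (P : ℚ) * b + (R : ℚ) * l = (L₀ : ℚ) := by exact_mod_cast hPb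
  have hpQ : (p : ℚ) ≤ -1 := by exact_mod_cast (by omega : p ≤ -1)
  have hPQ : (1 : ℚ) ≤ (P : ℚ) := by exact_mod_cast hP
  have hlQ : (1 : ℚ) ≤ (l : ℚ) := by exact_mod_cast hl
  have hℓQ : (1 : ℚ) ≤ (ℓ : ℚ) := by exact_mod_cast hℓ
  have hl₀Q : (1 : ℚ) ≤ (l₀ : ℚ) := by exact_mod_cast hl₀pos
  have hL₀Q : (1 : ℚ) ≤ (L₀ : ℚ) := by exact_mod_cast hL₀pos
  have hl₀ℓQ : (l₀ : ℚ) ≤ (ℓ : ℚ) := by exact_mod_cast hl₀ℓ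
  have hL₀ℓQ : (L₀ : ℚ) ≤ (ℓ : ℚ) := by exact_mod_cast hL₀ℓ
  constructor
  · -- left halfspace
    have hA : (0:ℚ) ≤ (l : ℚ) * ((l₀ : ℚ) - ((p : ℚ) * v.1 + (q : ℚ) * v.2)) :=
      mul_nonneg (by linarith) (by linarith)
    have hB : (0:ℚ) ≤ ((ℓ : ℚ) * p + l₀) * (v.2 - l) := by
      have h1 : ((ℓ : ℚ) * p + l₀) ≤ 0 := by nlinarith
      have h2 : v.2 - (l : ℚ) ≤ 0 := by linarith
      nlinarith [mul_nonneg (neg_nonneg.2 h1) (neg_nonneg.2 h2)]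
    have key : (p : ℚ) * ((l : ℚ) * (ℓ : ℚ)) ≤
        (p : ℚ) * (-(l : ℚ) * v.1 + ((ℓ : ℚ) + (a : ℚ)) * v.2) := by
      nlinarith [hA, hB, hpaQ, mul_self_nonneg (v.2 : ℚ)]
    by_contra hcon
    push_neg at hcon
    have := mul_lt_mul_of_neg_left hcon (by linarith : (p : ℚ) < 0)
    linarith
  · -- right halfspace
    have hA : (0:ℚ) ≤ (l : ℚ) * ((L₀ : ℚ) - ((P : ℚ) * v.1 + (R : ℚ) * v.2)) :=
      mul_nonneg (by linarith) (by linarith)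
    have hB : (0:ℚ) ≤ ((ℓ : ℚ) * P - L₀) * ((l : ℚ) - v.2) :=
      mul_nonneg (by nlinarith) (by linarith)
    have key : (P : ℚ) * ((l : ℚ) * v.1 + ((ℓ : ℚ) - (b : ℚ)) * v.2) ≤
        (P : ℚ) * ((l : ℚ) * (ℓ : ℚ)) := by
      nlinarith [hA, hB, hPbQ]
    exact le_of_mul_le_mul_left key (by linarith)

-- unimodular maps
def mapQ (α β γ δ : ℤ) (x : ℚ × ℚ) : ℚ × ℚ :=
  ((α : ℚ) * x.1 + (β : ℚ) * x.2, (γ : ℚ) * x.1 + (δ : ℚ) * x.2)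
def mapZ (α β γ δ : ℤ) (s : ℤ × ℤ) : ℤ × ℤ :=
  (α * s.1 + β * s.2, γ * s.1 + δ * s.2)
def tN (α β γ δ : ℤ) (η : ℤ × ℤ) : ℤ × ℤ :=
  (δ * η.1 - γ * η.2, -β * η.1 + α * η.2)

lemma mapQ_toQ (α β γ δ : ℤ) (s : ℤ × ℤ) : mapQ α β γ δ (toQ s) = toQ (mapZ α β γ δ s) := by
  simp [mapQ, mapZ, toQ]

lemma mapQ_inv (α β γ δ : ℤ) (hdet : α * δ - β * γ = 1) (x : ℚ × ℚ) :
    mapQ δ (-β) (-γ) α (mapQ α β γ δ x) = x := by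
  have hdetQ : (α : ℚ) * δ - (β : ℚ) * γ = 1 := by exact_mod_cast hdet
  simp only [mapQ]
  ext
  · simp only
    push_cast
    linear_combination x.1 * hdetQ
  · simp only
    push_cast
    linear_combination x.2 * hdetQ

lemma mapZ_inv (α β γ δ : ℤ) (hdet : α * δ - β * γ = 1) (s : ℤ × ℤ) :
    mapZ δ (-β) (-γ) α (mapZ α β γ δ s) = s := by
  simp only [mapZ]
  ext
  · simp only
    linear_combination s.1 * hdet
  · simp only
    linear_combination s.2 * hdet

lemma mapQ_inj (α β γ δ : ℤ) (hdet : α * δ - β * γ = 1) :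
    Function.Injective (mapQ α β γ δ) := by
  intro x y h
  have := congrArg (mapQ δ (-β) (-γ) α) h
  rwa [mapQ_inv α β γ δ hdet, mapQ_inv α β γ δ hdet] at this

lemma mapZ_inj (α β γ δ : ℤ) (hdet : α * δ - β * γ = 1) :
    Function.Injective (mapZ α β γ δ) := by
  intro x y h
  have := congrArg (mapZ δ (-β) (-γ) α) h
  rwa [mapZ_inv α β γ δ hdet, mapZ_inv α β γ δ hdet] at this

lemma pairQ_mapQ (α β γ δ : ℤ) (hdet : α * δ - β * γ = 1) (η : ℤ × ℤ) (x : ℚ × ℚ) :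
    pairQ (tN α β γ δ η) (mapQ α β γ δ x) = pairQ η x := by
  have hdetQ : (α : ℚ) * δ - (β : ℚ) * γ = 1 := by exact_mod_cast hdet
  simp only [pairQ, mapQ, tN]
  push_cast
  linear_combination ((η.1 : ℚ) * x.1 + (η.2 : ℚ) * x.2) * hdetQ

lemma mapQ_isLinear (α β γ δ : ℤ) : IsLinearMap ℚ (mapQ α β γ δ) := by
  constructor
  · intro x y
    simp only [mapQ, Prod.fst_add, Prod.snd_add, Prod.mk_add_mk]
    ext <;> simp <;> ring
  · intro c x
    simp only [mapQ, Prod.smul_fst, Prod.smul_snd, Prod.smul_mk, smul_eq_mul]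
    ext <;> simp <;> ring

lemma mapQ_hull (α β γ δ : ℤ) (hdet : α * δ - β * γ = 1) (A : Set (ℚ × ℚ)) :
    mapQ α β γ δ '' (convexHull ℚ A) = convexHull ℚ (mapQ α β γ δ '' A) := by
  let f : (ℚ × ℚ) →ₗ[ℚ] (ℚ × ℚ) := (mapQ_isLinear α β γ δ).mk' _
  show f '' _ = convexHull ℚ (f '' A)
  apply Set.Subset.antisymm
  · rintro _ ⟨x, hx, rfl⟩
    have hsub : convexHull ℚ A ⊆ f ⁻¹' (convexHull ℚ (f '' A)) := by
      apply convexHull_min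
      · intro a ha
        exact subset_convexHull ℚ _ ⟨a, ha, rfl⟩
      · exact (convex_convexHull ℚ (f '' A)).linear_preimage f
    exact hsub hx
  · apply convexHull_min
    · exact Set.image_mono (subset_convexHull ℚ A)
    · exact (convex_convexHull ℚ A).linear_image f

lemma mapQ_image_inv (α β γ δ : ℤ) (hdet : α * δ - β * γ = 1) (A : Set (ℚ × ℚ)) :
    mapQ δ (-β) (-γ) α '' (mapQ α β γ δ '' A) = A := by
  rw [← Set.image_comp]
  have : (mapQ δ (-β) (-γ) α ∘ mapQ α β γ δ) = id := by
    funext x; exact mapQ_inv α β γ δ hdet x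
  rw [this, Set.image_id]

lemma posDir_map (α β γ δ : ℤ) (hdet : α * δ - β * γ = 1) {Q : Set (ℚ × ℚ)}
    (hpos : PosDir Q) : PosDir (mapQ α β γ δ '' Q) := by
  intro n hn
  -- pairQ n (mapQ x) = pairQ (Mᵀ n) x
  set m : ℤ × ℤ := (α * n.1 + γ * n.2, β * n.1 + δ * n.2) with hm
  have hmn : m ≠ 0 := by
    intro h
    apply hn
    have h1 : α * n.1 + γ * n.2 = 0 := congrArg Prod.fst h
    have h2 : β * n.1 + δ * n.2 = 0 := congrArg Prod.snd h
    have e1 : n.1 = 0 := by linear_combination δ * h1 + (-γ) * h2 + (-n.1) * hdet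
    have e2 : n.2 = 0 := by linear_combination (-β) * h1 + α * h2 + (-n.2) * hdet
    exact Prod.ext e1 e2
  obtain ⟨x, hxQ, hx⟩ := hpos m hmn
  refine ⟨mapQ α β γ δ x, ⟨x, hxQ, rfl⟩, ?_⟩
  have : pairQ n (mapQ α β γ δ x) = pairQ m x := by
    simp only [pairQ, mapQ, hm]
    push_cast
    ring
  rw [this]
  exact hx

lemma facet_map (α β γ δ : ℤ) (hdet : α * δ - β * γ = 1) {Q F : Set (ℚ × ℚ)}
    {η : ℤ × ℤ} {l : ℤ} (h : IsFacetWith Q η l F) :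
    IsFacetWith (mapQ α β γ δ '' Q) (tN α β γ δ η) l (mapQ α β γ δ '' F) := by
  obtain ⟨hgcd, hl, hsupp, hFdef, x, hxF, y, hyF, hxy⟩ := h
  refine ⟨?_, hl, ?_, ?_, mapQ α β γ δ x, ⟨x, hxF, rfl⟩, mapQ α β γ δ y, ⟨y, hyF, rfl⟩,
    fun hc => hxy (mapQ_inj α β γ δ hdet hc)⟩
  · -- gcd of transported normal is 1
    rw [← Int.isCoprime_iff_gcd_eq_one] at hgcd ⊢
    obtain ⟨u, v, huv⟩ := hgcd
    refine ⟨u * α + v * β, u * γ + v * δ, ?_⟩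
    simp only [tN]
    linear_combination (α * δ - β * γ) * huv + hdet
  · rintro _ ⟨z, hz, rfl⟩
    rw [pairQ_mapQ α β γ δ hdet]
    exact hsupp z hz
  · ext w
    constructor
    · rintro ⟨z, hzF, rfl⟩
      have hzF' := hFdef ▸ hzF
      exact ⟨⟨z, hzF'.1, rfl⟩, by rw [pairQ_mapQ α β γ δ hdet]; exact hzF'.2⟩
    · rintro ⟨⟨z, hzQ, rfl⟩, hpair⟩
      refine ⟨z, ?_, rfl⟩
      rw [hFdef]
      exact ⟨hzQ, by rwa [pairQ_mapQ α β γ δ hdet] at hpair⟩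

lemma facetDvd_map (α β γ δ : ℤ) (hdet : α * δ - β * γ = 1) {Q : Set (ℚ × ℚ)} {ℓ : ℤ}
    (hdvd : FacetDvd Q ℓ) : FacetDvd (mapQ α β γ δ '' Q) ℓ := by
  intro F' η' l' h
  have hdet' : δ * α - (-β) * (-γ) = 1 := by linarith [hdet]
  have h2 := facet_map δ (-β) (-γ) α hdet' h
  rw [mapQ_image_inv α β γ δ hdet] at h2
  exact hdvd _ _ _ h2

lemma line_bound {S : Finset (ℤ × ℤ)} {Q : Set (ℚ × ℚ)}
    (hQ : Q = convexHull ℚ (toQ '' (S : Set (ℤ × ℤ)))) (l a₀ b₀ : ℤ)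
    (hle : ∀ s ∈ S, s.2 ≤ l)
    (hA : ∀ s ∈ S, s.2 = l → a₀ ≤ s.1 ∧ s.1 ≤ b₀) :
    ∀ x ∈ Q, x.2 = (l : ℚ) → (a₀ : ℚ) ≤ x.1 ∧ x.1 ≤ (b₀ : ℚ) := by
  set C : Set (ℚ × ℚ) :=
    {x | x.2 < (l : ℚ) ∨ (x.2 = (l : ℚ) ∧ (a₀ : ℚ) ≤ x.1 ∧ x.1 ≤ (b₀ : ℚ))} with hC
  have hCconv : Convex ℚ C := by
    rintro x hx y hy u v hu hv huv
    have hcoord : (u • x + v • y).1 = u * x.1 + v * y.1 ∧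
        (u • x + v • y).2 = u * x.2 + v * y.2 := by
      constructor <;> simp [Prod.smul_fst, Prod.smul_snd, smul_eq_mul]
    have hx2 : x.2 ≤ (l : ℚ) := by rcases hx with h | h; exact le_of_lt h; exact le_of_eq h.1
    have hy2 : y.2 ≤ (l : ℚ) := by rcases hy with h | h; exact le_of_lt h; exact le_of_eq h.1
    rcases hx with hxl | ⟨hxe, hxa, hxb⟩
    · rcases eq_or_lt_of_le hu with hu0 | hu0
      · have : u • x + v • y = y := by
          rw [← hu0]
          have : v = 1 := by linarith
          rw [this]
          simp
        rw [this]; exact hy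
      · left
        rw [hcoord.2]
        have h1 : u * x.2 < u * l := mul_lt_mul_of_pos_left hxl hu0
        have h2 : v * y.2 ≤ v * l := mul_le_mul_of_nonneg_left hy2 hv
        have e : u * (l : ℚ) + v * l = l := by linear_combination (l : ℚ) * huv
        linarith
    · rcases hy with hyl | ⟨hye, hya, hyb⟩
      · rcases eq_or_lt_of_le hv with hv0 | hv0
        · have : u • x + v • y = x := by
            rw [← hv0]
            have : u = 1 := by linarith
            rw [this]
            simp
          rw [this]; right; exact ⟨hxe, hxa, hxb⟩
        · left
          rw [hcoord.2]
          have h1 : v * y.2 < v * l := mul_lt_mul_of_pos_left hyl hv0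
          have h2 : u * x.2 ≤ u * l := mul_le_mul_of_nonneg_left hx2 hu
          have e : u * (l : ℚ) + v * l = l := by linear_combination (l : ℚ) * huv
          linarith
      · right
        rw [hcoord.1, hcoord.2, hxe, hye]
        refine ⟨by linear_combination (l : ℚ) * huv, ?_, ?_⟩
        · have h1 : u * (a₀ : ℚ) ≤ u * x.1 := mul_le_mul_of_nonneg_left hxa hu
          have h2 : v * (a₀ : ℚ) ≤ v * y.1 := mul_le_mul_of_nonneg_left hya hv
          have e : u * (a₀ : ℚ) + v * a₀ = a₀ := by linear_combination (a₀ : ℚ) * huv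
          linarith
        · have h1 : u * x.1 ≤ u * (b₀ : ℚ) := mul_le_mul_of_nonneg_left hxb hu
          have h2 : v * y.1 ≤ v * (b₀ : ℚ) := mul_le_mul_of_nonneg_left hyb hv
          have e : u * (b₀ : ℚ) + v * b₀ = b₀ := by linear_combination (b₀ : ℚ) * huv
          linarith
  have hsub : Q ⊆ C := by
    rw [hQ]
    apply convexHull_min
    · rintro _ ⟨s, hs, rfl⟩
      rcases eq_or_lt_of_le (hle s hs) with he | hl2
      · right
        obtain ⟨h1, h2⟩ := hA s hs he
        exact ⟨by simp [toQ]; exact_mod_cast he, by simp [toQ]; exact_mod_cast h1,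
          by simp [toQ]; exact_mod_cast h2⟩
      · left
        simp only [toQ]
        exact_mod_cast hl2
    · exact hCconv
  intro x hxQ hx2
  rcases hsub hxQ with h | h
  · exact absurd hx2 (ne_of_lt h)
  · exact h.2

lemma seg_coord (a b l : ℤ) (hab : a ≤ b) :
    ∀ x ∈ convexHull ℚ ({toQ (a, l), toQ (b, l)} : Set (ℚ × ℚ)),
      (a : ℚ) ≤ x.1 ∧ x.1 ≤ (b : ℚ) ∧ x.2 = (l : ℚ) := by
  intro x hx
  rw [convexHull_pair] at hx
  obtain ⟨u, v, hu, hv, huv, he⟩ := hx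
  have h1 : x.1 = u * (a : ℚ) + v * (b : ℚ) := by
    rw [← he]; simp [toQ, Prod.smul_fst, smul_eq_mul]
  have h2 : x.2 = u * (l : ℚ) + v * (l : ℚ) := by
    rw [← he]; simp [toQ, Prod.smul_snd, smul_eq_mul]
  have habQ : (a : ℚ) ≤ (b : ℚ) := by exact_mod_cast hab
  have ea : u * (a : ℚ) + v * a = a := by linear_combination (a : ℚ) * huv
  have eb : u * (b : ℚ) + v * b = b := by linear_combination (b : ℚ) * huv
  have el : u * (l : ℚ) + v * l = l := by linear_combination (l : ℚ) * huv
  refine ⟨?_, ?_, ?_⟩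
  · rw [h1]; nlinarith [mul_le_mul_of_nonneg_left habQ hv]
  · rw [h1]; nlinarith [mul_le_mul_of_nonneg_left habQ hu]
  · rw [h2]; linarith


/-- If `Q` is an LDP-polygon of index `ℓ` and `F` a facet of local index `l`, then
`|F ∩ ℤ²| ≤ 2ℓ(l + 1) + 1`; moreover, if `F = conv{(a,l),(b,l)}` with
`−l < a ≤ 0 < b`, then `Q` satisfies the two stated linear inequalities. -/
theorem facet_bound_and_halfspaces
    (Q F : Set (ℚ × ℚ)) (η : ℤ × ℤ) (ℓ l : ℤ)
    (hQ : IsLDPPolygon Q) (hℓ : HasIndex Q ℓ) (hF : IsFacetWith Q η l F) :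
    (latticeCount F : ℤ) ≤ 2 * ℓ * (l + 1) + 1 ∧
    ∀ a b : ℤ, -l < a → a ≤ 0 → 0 < b →
      F = convexHull ℚ {toQ (a, l), toQ (b, l)} →
      ∀ v ∈ Q, -(l : ℚ) * v.1 + ((ℓ : ℚ) + (a : ℚ)) * v.2 ≤ (l : ℚ) * (ℓ : ℚ) ∧
        (l : ℚ) * v.1 + ((ℓ : ℚ) - (b : ℚ)) * v.2 ≤ (l : ℚ) * (ℓ : ℚ) := by
  classical
  obtain ⟨⟨⟨⟨S, hShull⟩, -⟩, h0int⟩, -⟩ := hQ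
  have hpos : PosDir Q := posDir_of_interior h0int
  have hdvd : FacetDvd Q ℓ := fun F' η' l' h => hℓ.2.1 F' η' l' h
  have hℓpos : 0 < ℓ := hℓ.1
  obtain ⟨hgcd, hl, hsuppη, hFdef, hFtwo⟩ := hF
  -- PART 2 : the halfspace bounds
  have part2 : ∀ a b : ℤ, -l < a → a ≤ 0 → 0 < b →
      F = convexHull ℚ {toQ (a, l), toQ (b, l)} →
      ∀ v ∈ Q, -(l : ℚ) * v.1 + ((ℓ : ℚ) + (a : ℚ)) * v.2 ≤ (l : ℚ) * (ℓ : ℚ) ∧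
        (l : ℚ) * v.1 + ((ℓ : ℚ) - (b : ℚ)) * v.2 ≤ (l : ℚ) * (ℓ : ℚ) := by
    intro a b ha1 ha2 hb hFconv
    have hab : a ≤ b := by omega
    have haF : toQ (a, l) ∈ F := by
      rw [hFconv]; exact subset_convexHull ℚ _ (Set.mem_insert _ _)
    have hbF : toQ (b, l) ∈ F := by
      rw [hFconv]
      exact subset_convexHull ℚ _ (Set.mem_insert_of_mem _ rfl)
    have haQF := hFdef ▸ haF
    have hbQF := hFdef ▸ hbF
    have haZ : η.1 * a + η.2 * l = l := by
      have := haQF.2; rw [pairQ_toQ] at this; exact_mod_cast this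
    have hbZ : η.1 * b + η.2 * l = l := by
      have := hbQF.2; rw [pairQ_toQ] at this; exact_mod_cast this
    have hη1 : η.1 = 0 := by
      have h0 : η.1 * (a - b) = 0 := by ring_nf; omega
      rcases mul_eq_zero.mp h0 with h | h
      · exact h
      · omega
    have hη2 : η.2 = 1 := by
      rw [hη1] at haZ
      have : (η.2 - 1) * l = 0 := by ring_nf; omega
      rcases mul_eq_zero.mp this with h | h
      · omega
      · omega
    have hη : η = (0, 1) := Prod.ext hη1 hη2
    subst hη
    have hQle : ∀ x ∈ Q, x.2 ≤ (l : ℚ) := by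
      intro x hx
      have := hsuppη x hx
      simpa [pairQ] using this
    have hline : ∀ s ∈ S, s.2 = l → a ≤ s.1 ∧ s.1 ≤ b := by
      intro s hs h2
      have hsQ : toQ s ∈ Q := mem_hull hShull hs
      have hsF : toQ s ∈ F := by
        rw [hFdef]
        refine ⟨hsQ, ?_⟩
        rw [pairQ_toQ]
        simp only
        rw [h2]
        push_cast; ring
      rw [hFconv] at hsF
      obtain ⟨h1, h2', -⟩ := seg_coord a b l hab (toQ s) hsF
      simp only [toQ] at h1 h2'
      exact ⟨by exact_mod_cast h1, by exact_mod_cast h2'⟩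
    exact main_halfspaces hShull hpos hdvd hℓpos l a b hl hQle haQF.1 hbQF.1 hline
  refine ⟨?_, part2⟩
  -- PART 1 : the lattice point count
  obtain ⟨u, v, huv⟩ := Int.isCoprime_iff_gcd_eq_one.mpr hgcd
  have hdet : v * η.2 - (-u) * η.1 = 1 := by linarith
  set Q₁ : Set (ℚ × ℚ) := mapQ v (-u) η.1 η.2 '' Q with hQ₁
  set F₁ : Set (ℚ × ℚ) := mapQ v (-u) η.1 η.2 '' F with hF₁def
  set S₁ : Finset (ℤ × ℤ) := S.image (mapZ v (-u) η.1 η.2) with hS₁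
  have hQ₁hull : Q₁ = convexHull ℚ (toQ '' (S₁ : Set (ℤ × ℤ))) := by
    rw [hQ₁, hShull, mapQ_hull v (-u) η.1 η.2 hdet]
    congr 1
    rw [hS₁, Finset.coe_image, ← Set.image_comp, ← Set.image_comp]
    apply Set.image_congr
    intro s _
    exact mapQ_toQ v (-u) η.1 η.2 s
  have hpos₁ : PosDir Q₁ := posDir_map v (-u) η.1 η.2 hdet hpos
  have hdvd₁ : FacetDvd Q₁ ℓ := facetDvd_map v (-u) η.1 η.2 hdet hdvd
  have htN : tN v (-u) η.1 η.2 η = (0, 1) := by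
    simp only [tN]
    refine Prod.ext ?_ ?_
    · simp only; ring
    · simp only; linarith
  have hfac₁ : IsFacetWith Q₁ (0, 1) l F₁ := by
    have := facet_map v (-u) η.1 η.2 hdet ⟨hgcd, hl, hsuppη, hFdef, hFtwo⟩
    rwa [htN] at this
  have hQ₁le : ∀ x ∈ Q₁, x.2 ≤ (l : ℚ) := by
    intro x hx
    have := hfac₁.2.2.1 x hx
    simpa [pairQ] using this
  have hS₁le : ∀ s ∈ S₁, s.2 ≤ l := by
    intro s hs
    have := hQ₁le (toQ s) (mem_hull hQ₁hull hs)
    simp only [toQ] at this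
    exact_mod_cast this
  -- the set of generators on the top line is nonempty
  set Sl : Finset (ℤ × ℤ) := S₁.filter (fun s => s.2 = l) with hSl
  have hSlne : Sl.Nonempty := by
    obtain ⟨x, hxF₁, -⟩ := hfac₁.2.2.2.2
    have hxQ₁ : x ∈ Q₁ ∧ pairQ (0, 1) x = (l : ℚ) := by
      have h := hxF₁
      rw [hfac₁.2.2.2.1] at h
      exact h
    by_contra hc
    rw [Finset.not_nonempty_iff_eq_empty] at hc
    have hall : ∀ s ∈ S₁, pairQ (0, 1) (toQ s) ≤ ((l : ℚ) - 1) := by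
      intro s hs
      have h1 : s.2 ≠ l := by
        intro h
        have : s ∈ Sl := Finset.mem_filter.mpr ⟨hs, h⟩
        rw [hc] at this
        exact absurd this (Finset.notMem_empty s)
      have h2 : s.2 ≤ l - 1 := by have := hS₁le s hs; omega
      rw [pairQ_toQ]
      have : (0 * s.1 + 1 * s.2 : ℤ) ≤ l - 1 := by omega
      calc ((0 * s.1 + 1 * s.2 : ℤ) : ℚ) ≤ ((l - 1 : ℤ) : ℚ) := by exact_mod_cast this
        _ = (l : ℚ) - 1 := by push_cast; ring
    have := hull_le hQ₁hull (0, 1) ((l : ℚ) - 1) hall x hxQ₁.1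
    rw [hxQ₁.2] at this
    linarith
  set I : Finset ℤ := Sl.image Prod.fst with hI
  have hIne : I.Nonempty := hSlne.image _
  set a₀ : ℤ := I.min' hIne with ha₀
  set b₀ : ℤ := I.max' hIne with hb₀
  have hab₀ : a₀ ≤ b₀ := I.min'_le _ (I.max'_mem hIne)
  have hline₁ : ∀ s ∈ S₁, s.2 = l → a₀ ≤ s.1 ∧ s.1 ≤ b₀ := by
    intro s hs h2
    have hsl : s ∈ Sl := Finset.mem_filter.mpr ⟨hs, h2⟩
    have hmem : s.1 ∈ I := Finset.mem_image_of_mem _ hsl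
    exact ⟨I.min'_le _ hmem, I.le_max' _ hmem⟩
  have hwit : ∀ c : ℤ, c ∈ I → toQ (c, l) ∈ Q₁ := by
    intro c hc
    obtain ⟨s, hsSl, hse⟩ := Finset.mem_image.mp hc
    have h2 : s.2 = l := (Finset.mem_filter.mp hsSl).2
    have : (c, l) = s := by
      refine Prod.ext ?_ ?_ <;> simp [← hse, h2]
    rw [this]
    exact mem_hull hQ₁hull (Finset.mem_filter.mp hsSl).1
  have main := main_halfspaces hQ₁hull hpos₁ hdvd₁ hℓpos l a₀ b₀ hl hQ₁le
    (hwit a₀ (I.min'_mem hIne)) (hwit b₀ (I.max'_mem hIne)) hline₁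
  -- use a lattice generator strictly below the x-axis to bound b₀ - a₀
  have hba : b₀ - a₀ ≤ 2 * ℓ * (l + 1) := by
    obtain ⟨z, hzS, hz2⟩ := exists_neg hQ₁hull hpos₁
    obtain ⟨h1, h2⟩ := main (toQ z) (mem_hull hQ₁hull hzS)
    simp only [toQ] at h1 h2
    have hz2Q : ((z.2 : ℚ)) ≤ -1 := by exact_mod_cast hz2
    have hsum : (2 * (ℓ : ℚ) + a₀ - b₀) * (z.2 : ℚ) ≤ 2 * (l : ℚ) * (ℓ : ℚ) := by
      nlinarith [h1, h2]
    have hlQ : (1 : ℚ) ≤ (l : ℚ) := by exact_mod_cast hl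
    have hℓQ : (1 : ℚ) ≤ (ℓ : ℚ) := by exact_mod_cast hℓpos
    have hQgoal : (b₀ : ℚ) - (a₀ : ℚ) ≤ 2 * (ℓ : ℚ) * ((l : ℚ) + 1) := by
      rcases le_or_gt ((b₀ : ℚ) - (a₀ : ℚ)) (2 * (ℓ : ℚ)) with hcase | hcase
      · nlinarith
      · have hC : (2 * (ℓ : ℚ) + a₀ - b₀) ≤ 0 := by linarith
        have := mul_le_mul_of_nonpos_left hz2Q hC
        nlinarith
    have : ((b₀ - a₀ : ℤ) : ℚ) ≤ ((2 * ℓ * (l + 1) : ℤ) : ℚ) := by push_cast; linarith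
    exact_mod_cast this
  -- counting the lattice points of F
  have himg : mapZ v (-u) η.1 η.2 '' {p : ℤ × ℤ | toQ p ∈ F} = {p : ℤ × ℤ | toQ p ∈ F₁} := by
    ext p
    constructor
    · rintro ⟨r, hr, rfl⟩
      show toQ (mapZ v (-u) η.1 η.2 r) ∈ F₁
      rw [← mapQ_toQ]
      exact ⟨toQ r, hr, rfl⟩
    · rintro hp
      obtain ⟨x, hxF, hxe⟩ := hp
      have hinv := mapQ_inv v (-u) η.1 η.2 hdet x
      simp only [neg_neg] at hinv
      have hxinv : x = toQ (mapZ η.2 u (-η.1) v p) := by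
        have h1 := congrArg (mapQ η.2 u (-η.1) v) hxe
        rw [hinv] at h1
        rw [h1]
        exact mapQ_toQ η.2 u (-η.1) v p
      refine ⟨mapZ η.2 u (-η.1) v p, ?_, ?_⟩
      · show toQ _ ∈ F
        rw [← hxinv]; exact hxF
      · have := mapZ_inv η.2 u (-η.1) v (by linear_combination huv) p
        simpa using this
  have hsub : {p : ℤ × ℤ | toQ p ∈ F₁} ⊆ (fun t : ℤ => (t, l)) '' (Set.Icc a₀ b₀) := by
    intro p hp
    have hp' : toQ p ∈ Q₁ ∧ pairQ (0, 1) (toQ p) = (l : ℚ) := by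
      have h := hp
      rw [Set.mem_setOf_eq, hfac₁.2.2.2.1] at h
      exact h
    have hp2 : p.2 = l := by
      have := hp'.2
      rw [pairQ_toQ] at this
      have h2 : (0 * p.1 + 1 * p.2 : ℤ) = l := by exact_mod_cast this
      omega
    have hb := line_bound hQ₁hull l a₀ b₀ hS₁le hline₁ (toQ p) hp'.1
      (by simp [toQ]; exact_mod_cast hp2)
    refine ⟨p.1, ?_, ?_⟩
    · have hb1 := hb.1
      have hb2 := hb.2
      simp only [toQ] at hb1 hb2
      constructor
      · exact_mod_cast hb1
      · exact_mod_cast hb2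
    · exact Prod.ext rfl hp2.symm
  have hcount : (latticeCount F : ℤ) ≤ b₀ - a₀ + 1 := by
    have e1 : latticeCount F = ({p : ℤ × ℤ | toQ p ∈ F₁}).ncard := by
      rw [latticeCount, ← himg, Set.ncard_image_of_injective _ (mapZ_inj v (-u) η.1 η.2 hdet)]
    have hfin : ((fun t : ℤ => (t, l)) '' (Set.Icc a₀ b₀)).Finite :=
      (Set.finite_Icc a₀ b₀).image _
    have e2 : ({p : ℤ × ℤ | toQ p ∈ F₁}).ncard ≤
        ((fun t : ℤ => (t, l)) '' (Set.Icc a₀ b₀)).ncard :=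
      Set.ncard_le_ncard hsub hfin
    have e3 : ((fun t : ℤ => (t, l)) '' (Set.Icc a₀ b₀)).ncard = (Set.Icc a₀ b₀).ncard :=
      Set.ncard_image_of_injective _ (fun x y h => by simpa using congrArg Prod.fst h)
    have e4 : (Set.Icc a₀ b₀).ncard = (b₀ + 1 - a₀).toNat := by
      rw [← Finset.coe_Icc, Set.ncard_coe_finset, Int.card_Icc]
    have e5 : ((b₀ + 1 - a₀).toNat : ℤ) = b₀ + 1 - a₀ := Int.toNat_of_nonneg (by omega)
    rw [e1]
    calc (({p : ℤ × ℤ | toQ p ∈ F₁}).ncard : ℤ)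
        ≤ (((fun t : ℤ => (t, l)) '' (Set.Icc a₀ b₀)).ncard : ℤ) := by exact_mod_cast e2
      _ = ((b₀ + 1 - a₀).toNat : ℤ) := by rw [e3, e4]
      _ = b₀ + 1 - a₀ := e5
      _ ≤ b₀ - a₀ + 1 := by omega
  omega
end
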